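/- arXiv:2005.13327 — 3 statements merged into one kernel-verified Lean document; each statement's English description precedes it below -/
import Mathlib

section
/- Let μ be the product Bernoulli(1−q) measure on Ω = {0,1}^Λ with Λ = {0,...,ℓ−1}^d, q ∈ (0,1). Let f(η) be the number of connected clusters of empty sites of η in Λ (with respect to nearest-neighbor adjacency in Λ). Then Var_μ(f) ≥ q(1−q)^{2d+1}·|3ℤ^d ∩ Λ|. -/
open Finset

noncomputable section

/-- The graph on the empty sites of `η` in the box `Λ = {0,…,ℓ−1}^d`, with nearest-neighbour
adjacency. -/
def emptyClusterGraph {d ℓ : ℕ} (η : (Fin d → Fin ℓ) → Bool) :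
    SimpleGraph {x : Fin d → Fin ℓ // η x = false} :=
  SimpleGraph.fromRel fun a b => ∑ i, |((a.1 i : ℤ)) - (b.1 i : ℤ)| = 1

/-- `f(η)` = the number of connected clusters of empty sites of `η` in `Λ`. -/
def clusterCount {d ℓ : ℕ} (η : (Fin d → Fin ℓ) → Bool) : ℕ :=
  Nat.card (emptyClusterGraph η).ConnectedComponent

/-- Expectation under the product Bernoulli(1−q) measure on `{0,1}^Λ`
(`η x = true` means occupied, probability `1−q`; `η x = false` means empty, probability `q`). -/
def boxExp (d ℓ : ℕ) (q : ℝ) (g : ((Fin d → Fin ℓ) → Bool) → ℝ) : ℝ :=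
  ∑ η : (Fin d → Fin ℓ) → Bool, (∏ x, if η x then (1 - q) else q) * g η

/-- Variance under the product Bernoulli(1−q) measure. -/
def boxVar (d ℓ : ℕ) (q : ℝ) (g : ((Fin d → Fin ℓ) → Bool) → ℝ) : ℝ :=
  boxExp d ℓ q fun η => (g η - boxExp d ℓ q g) ^ 2


namespace VarAux

open scoped Classical

variable {d ℓ : ℕ}

abbrev Lam (d ℓ : ℕ) := Fin d → Fin ℓ
abbrev Conf (d ℓ : ℕ) := Lam d ℓ → Bool

def w (q : ℝ) (b : Bool) : ℝ := if b then 1 - q else q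

def mu (q : ℝ) (η : Conf d ℓ) : ℝ := ∏ z, w q (η z)

def dist1 (x z : Lam d ℓ) : Prop := (∑ i, |((x i : ℤ)) - (z i : ℤ)|) = 1

def nbhd (x : Lam d ℓ) : Finset (Lam d ℓ) := univ.filter (dist1 x)

def ind (x : Lam d ℓ) (η : Conf d ℓ) : ℝ := if ∀ z ∈ nbhd x, η z = true then 1 else 0

def s (q : ℝ) (x : Lam d ℓ) (η : Conf d ℓ) : ℝ :=
  ind x η * (if η x then -q else 1 - q)

def merge (x : Lam d ℓ) (ρ : {z : Lam d ℓ // z ≠ x} → Bool) (b : Bool) : Conf d ℓ :=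
  fun z => if h : z = x then b else ρ ⟨z, h⟩

lemma merge_self (x : Lam d ℓ) (ρ) (b : Bool) : merge x ρ b x = b := by
  simp [merge]

lemma merge_ne (x : Lam d ℓ) (ρ) (b : Bool) {z : Lam d ℓ} (h : z ≠ x) :
    merge x ρ b z = ρ ⟨z, h⟩ := by simp [merge, h]

def splitEquiv (x : Lam d ℓ) : Bool × ({z : Lam d ℓ // z ≠ x} → Bool) ≃ Conf d ℓ where
  toFun p := merge x p.2 p.1
  invFun η := (η x, fun z => η z.1)
  left_inv p := by
    obtain ⟨b, ρ⟩ := p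
    refine Prod.ext ?_ ?_
    · simp [merge]
    · funext z
      exact merge_ne x ρ b z.2
  right_inv η := by
    funext z
    by_cases h : z = x
    · subst h; simp [merge]
    · simp [merge, h]

lemma sum_split (x : Lam d ℓ) (F : Conf d ℓ → ℝ) :
    ∑ η : Conf d ℓ, F η =
      ∑ ρ : {z : Lam d ℓ // z ≠ x} → Bool, (F (merge x ρ false) + F (merge x ρ true)) := by
  rw [← Equiv.sum_comp (splitEquiv x) F, Fintype.sum_prod_type_right]
  congr 1
  funext ρ
  simp [splitEquiv, Fintype.sum_bool]
  ring

lemma mu_merge (q : ℝ) (x : Lam d ℓ) (ρ) (b : Bool) :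
    mu q (merge x ρ b) = w q b * ∏ z : {z : Lam d ℓ // z ≠ x}, w q (ρ z) := by
  unfold mu
  rw [← Finset.mul_prod_erase (univ : Finset (Lam d ℓ)) _ (mem_univ x), merge_self]
  congr 1
  rw [Finset.prod_subtype (univ.erase x) (p := fun z => z ≠ x) (fun z => by simp)
    (fun z => w q (merge x ρ b z))]
  apply Finset.prod_congr rfl
  intro z _
  rw [merge_ne x ρ b z.2]


lemma not_dist1_self (x : Lam d ℓ) : ¬ dist1 x x := by
  simp [dist1]

lemma not_mem_nbhd_self (x : Lam d ℓ) : x ∉ nbhd x := by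
  simp [nbhd, not_dist1_self]

lemma ind_merge (x : Lam d ℓ) (ρ) (b b' : Bool) :
    ind x (merge x ρ b) = ind x (merge x ρ b') := by
  unfold ind
  have key : ∀ z ∈ nbhd x, merge x ρ b z = merge x ρ b' z := by
    intro z hz
    have hzx : z ≠ x := by
      intro he
      rw [he] at hz
      exact not_mem_nbhd_self x hz
    rw [merge_ne x ρ _ hzx, merge_ne x ρ _ hzx]
  exact if_congr ⟨fun h z hz => ((key z hz).symm.trans (h z hz)),
    fun h z hz => ((key z hz).trans (h z hz))⟩ rfl rfl

lemma ind_nonneg (x : Lam d ℓ) (η : Conf d ℓ) : 0 ≤ ind x η := by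
  unfold ind; split <;> norm_num

lemma ind_sq (x : Lam d ℓ) (η : Conf d ℓ) : ind x η ^ 2 = ind x η := by
  unfold ind; split <;> norm_num

/-- `Ix q x` is the probability that all neighbours of `x` are occupied. -/
def Ix (q : ℝ) (x : Lam d ℓ) : ℝ := ∑ η : Conf d ℓ, mu q η * ind x η

lemma s_merge (q : ℝ) (x : Lam d ℓ) (ρ) (b : Bool) :
    s q x (merge x ρ b) = ind x (merge x ρ false) * (if b then -q else 1 - q) := by
  unfold s
  rw [merge_self, ind_merge x ρ b false]

lemma Ix_eq (q : ℝ) (x : Lam d ℓ) :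
    Ix q x = ∑ ρ : {z : Lam d ℓ // z ≠ x} → Bool,
      (∏ z, w q (ρ z)) * ind x (merge x ρ false) := by
  unfold Ix
  rw [sum_split x]
  apply Finset.sum_congr rfl
  intro ρ _
  rw [mu_merge, mu_merge, ind_merge x ρ true false]
  simp [w]
  ring

lemma sum_mu_s (q : ℝ) (x : Lam d ℓ) : ∑ η : Conf d ℓ, mu q η * s q x η = 0 := by
  rw [sum_split x]
  apply Finset.sum_eq_zero
  intro ρ _
  rw [mu_merge, mu_merge, s_merge, s_merge]
  simp [w]
  ring

lemma sum_mu_s_sq (q : ℝ) (x : Lam d ℓ) :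
    ∑ η : Conf d ℓ, mu q η * (s q x η * s q x η) = q * (1 - q) * Ix q x := by
  rw [sum_split x, Ix_eq, Finset.mul_sum]
  apply Finset.sum_congr rfl
  intro ρ _
  rw [mu_merge, mu_merge, s_merge, s_merge]
  set P := ∏ z : {z : Lam d ℓ // z ≠ x}, w q (ρ z) with hP
  set I := ind x (merge x ρ false) with hI
  have h2 : I * I = I := by
    have := ind_sq x (merge x ρ false); rw [← hI] at this; nlinarith [this]
  simp only [w, Bool.false_eq_true, if_false, if_true, ite_false, ite_true]
  linear_combination (q * (1 - q) * P) * h2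

lemma mu_nonneg {q : ℝ} (hq0 : 0 ≤ q) (hq1 : q ≤ 1) (η : Conf d ℓ) : 0 ≤ mu q η :=
  Finset.prod_nonneg fun z _ => by unfold w; split <;> linarith

lemma sum_mu (q : ℝ) : ∑ η : Conf d ℓ, mu q η = 1 := by
  unfold mu
  rw [← Fintype.prod_sum (fun (_ : Lam d ℓ) (b : Bool) => w q b)]
  rw [Finset.prod_eq_one]
  intro z _
  simp [w, Fintype.sum_bool]

lemma Ix_val (q : ℝ) (x : Lam d ℓ) : Ix q x = (1 - q) ^ (nbhd x).card := by
  unfold Ix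
  have hpt : ∀ η : Conf d ℓ, mu q η * ind x η =
      ∏ z, (w q (η z) * if z ∈ nbhd x then (if η z then (1:ℝ) else 0) else 1) := by
    intro η
    rw [Finset.prod_mul_distrib]
    congr 1
    rw [Finset.prod_ite_mem univ (nbhd x) (fun z => if η z then (1:ℝ) else 0), univ_inter]
    unfold ind
    by_cases h : ∀ z ∈ nbhd x, η z = true
    · rw [if_pos h, Finset.prod_eq_one]
      intro z hz
      rw [h z hz]
      simp
    · rw [if_neg h]
      push_neg at h
      obtain ⟨z, hz, hzf⟩ := h
      refine (Finset.prod_eq_zero hz ?_).symm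
      simp [hzf]
  calc ∑ η : Conf d ℓ, mu q η * ind x η
      = ∑ η : Conf d ℓ, ∏ z, (w q (η z) * if z ∈ nbhd x then (if η z then (1:ℝ) else 0) else 1) :=
        Finset.sum_congr rfl fun η _ => hpt η
    _ = ∏ z, ∑ b : Bool, (w q b * if z ∈ nbhd x then (if b then (1:ℝ) else 0) else 1) := by
        rw [← Fintype.prod_sum
          (fun (z : Lam d ℓ) (b : Bool) => w q b * if z ∈ nbhd x then (if b then (1:ℝ) else 0) else 1)]
    _ = ∏ z, (if z ∈ nbhd x then (1 - q) else 1) := by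
        apply Finset.prod_congr rfl
        intro z _
        rw [Fintype.sum_bool]
        by_cases h : z ∈ nbhd x <;> simp [h, w] <;> ring
    _ = (1 - q) ^ (nbhd x).card := by
        rw [Finset.prod_ite_mem univ (nbhd x) (fun _ => (1 - q : ℝ)), univ_inter,
          Finset.prod_const]

lemma dist1_exists {x z : Lam d ℓ} (h : dist1 x z) :
    ∃ i, |((x i : ℤ)) - (z i : ℤ)| = 1 ∧ ∀ j, j ≠ i → x j = z j := by
  unfold dist1 at h
  have hex : ∃ i, x i ≠ z i := by
    by_contra hc
    push_neg at hc
    rw [Finset.sum_eq_zero (fun i _ => by rw [hc i]; simp)] at h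
    norm_num at h
  obtain ⟨i, hi⟩ := hex
  have hsplit : |((x i : ℤ)) - (z i : ℤ)| +
      ∑ j ∈ univ.erase i, |((x j : ℤ)) - (z j : ℤ)| = 1 := by
    rw [Finset.add_sum_erase univ (fun j => |((x j : ℤ)) - (z j : ℤ)|) (mem_univ i)]; exact h
  have hge : (1:ℤ) ≤ |((x i : ℤ)) - (z i : ℤ)| := by
    refine Int.one_le_abs ?_
    intro hc
    apply hi
    have : ((x i : ℤ)) = ((z i : ℤ)) := by linarith [sub_eq_zero.mp hc]
    exact Fin.ext (by exact_mod_cast this)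
  have hrest : ∑ j ∈ univ.erase i, |((x j : ℤ)) - (z j : ℤ)| = 0 := by
    have hnn : (0:ℤ) ≤ ∑ j ∈ univ.erase i, |((x j : ℤ)) - (z j : ℤ)| :=
      Finset.sum_nonneg fun j _ => abs_nonneg _
    omega
  refine ⟨i, by omega, ?_⟩
  intro j hj
  have hz0 : |((x j : ℤ)) - (z j : ℤ)| = 0 := by
    have := (Finset.sum_eq_zero_iff_of_nonneg (fun j _ => abs_nonneg _)).mp hrest j
      (Finset.mem_erase.mpr ⟨hj, mem_univ j⟩)
    exact this
  have : ((x j : ℤ)) = ((z j : ℤ)) := by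
    have := abs_eq_zero.mp hz0; linarith [sub_eq_zero.mp this]
  exact Fin.ext (by exact_mod_cast this)

lemma nbhd_card_le (hd : 1 ≤ d) (x : Lam d ℓ) : (nbhd x).card ≤ 2 * d := by
  have hl : 0 < ℓ := Fin.pos (x ⟨0, hd⟩)
  set ψ : Fin d × Bool → Lam d ℓ := fun p =>
    Function.update x p.1 (if p.2 then (⟨min (x p.1 + 1) (ℓ - 1), by omega⟩ : Fin ℓ)
      else (⟨x p.1 - 1, by omega⟩ : Fin ℓ)) with hψ
  have hsub : nbhd x ⊆ Finset.image ψ univ := by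
    intro z hz
    have hdz : dist1 x z := by
      simpa [nbhd] using hz
    obtain ⟨i, hi, hrest⟩ := dist1_exists hdz
    rcases abs_eq (by norm_num : (0:ℤ) ≤ 1) |>.mp hi with hcase | hcase
    · -- x i = z i + 1, so z i = x i - 1
      have hzi : (z i : ℕ) + 1 = (x i : ℕ) := by omega
      refine Finset.mem_image.mpr ⟨(i, false), mem_univ _, ?_⟩
      funext j
      by_cases hj : j = i
      · subst hj
        rw [hψ]
        simp only [Function.update_self, if_neg (Bool.false_ne_true)]
        exact Fin.ext (by simp; omega)
      · rw [hψ]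
        simp only []
        rw [Function.update_of_ne hj]
        exact hrest j hj
    · -- z i = x i + 1
      have hzi : (x i : ℕ) + 1 = (z i : ℕ) := by omega
      have hlt : (x i : ℕ) + 1 < ℓ := by
        rw [hzi]; exact (z i).isLt
      refine Finset.mem_image.mpr ⟨(i, true), mem_univ _, ?_⟩
      funext j
      by_cases hj : j = i
      · subst hj
        rw [hψ]
        simp only [Function.update_self, if_pos rfl]
        exact Fin.ext (by simp; omega)
      · rw [hψ]
        simp only []
        rw [Function.update_of_ne hj]
        exact hrest j hj
  calc (nbhd x).card ≤ (Finset.image ψ univ).card := Finset.card_le_card hsub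
    _ ≤ (univ : Finset (Fin d × Bool)).card := Finset.card_image_le
    _ = 2 * d := by simp [Fintype.card_prod]; ring

/-- points of `3ℤ^d` are at distance ≥ 3 apart, in particular not within distance 1. -/
lemma not_dist1_of_grid {x y : Lam d ℓ} (hx : ∀ i, 3 ∣ (x i : ℕ)) (hy : ∀ i, 3 ∣ (y i : ℕ)) :
    ¬ dist1 y x := by
  intro h
  obtain ⟨i, hi, -⟩ := dist1_exists h
  have h3 : (3:ℤ) ∣ ((y i : ℤ) - (x i : ℤ)) := by
    have hxi := hx i
    have hyi := hy i
    have : (3:ℤ) ∣ ((x i : ℕ) : ℤ) := Int.natCast_dvd_natCast.mpr hxi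
    have h2 : (3:ℤ) ∣ ((y i : ℕ) : ℤ) := Int.natCast_dvd_natCast.mpr hyi
    exact dvd_sub h2 this
  have h4 := (dvd_abs 3 _).mpr h3
  rw [hi] at h4
  norm_num at h4

/-- `s q y` only depends on the values of `η` on `{y} ∪ nbhd y`. -/
lemma s_congr (q : ℝ) (y : Lam d ℓ) {η η' : Conf d ℓ}
    (h : ∀ z, (z = y ∨ z ∈ nbhd y) → η z = η' z) : s q y η = s q y η' := by
  unfold s ind
  rw [h y (Or.inl rfl)]
  congr 1
  refine if_congr ?_ rfl rfl
  constructor <;> intro hh z hz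
  · rw [← h z (Or.inr hz)]; exact hh z hz
  · rw [h z (Or.inr hz)]; exact hh z hz

lemma sum_mu_s_cross (q : ℝ) {x y : Lam d ℓ} (hx : ∀ i, 3 ∣ (x i : ℕ)) (hy : ∀ i, 3 ∣ (y i : ℕ))
    (hxy : x ≠ y) : ∑ η : Conf d ℓ, mu q η * (s q x η * s q y η) = 0 := by
  rw [sum_split x]
  apply Finset.sum_eq_zero
  intro ρ _
  have hsy : s q y (merge x ρ true) = s q y (merge x ρ false) := by
    apply s_congr
    intro z hz
    have hzx : z ≠ x := by
      rcases hz with rfl | hz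
      · exact fun he => hxy he.symm
      · intro he
        subst he
        exact not_dist1_of_grid hx hy (by simpa [nbhd] using hz)
    rw [merge_ne x ρ _ hzx, merge_ne x ρ _ hzx]
  rw [mu_merge, mu_merge, s_merge, s_merge, hsy]
  simp only [w, Bool.false_eq_true, if_false, if_true, ite_false, ite_true]
  ring

section Flip

variable {η : Conf d ℓ} {x : Lam d ℓ}

/-- transfer of adjacency: it only depends on underlying points. -/
lemma adj_iff {η η' : Conf d ℓ} (a b : {z : Lam d ℓ // η z = false})
    (a' b' : {z : Lam d ℓ // η' z = false}) (ha : a.1 = a'.1) (hb : b.1 = b'.1) :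
    (emptyClusterGraph η).Adj a b ↔ (emptyClusterGraph η').Adj a' b' := by
  unfold emptyClusterGraph
  rw [SimpleGraph.fromRel_adj, SimpleGraph.fromRel_adj, ha, hb]
  constructor <;> rintro ⟨hne, hr⟩ <;> refine ⟨?_, hr⟩ <;>
    · intro he
      apply hne
      apply Subtype.ext
      rw [Subtype.ext_iff] at he
      first
        | exact he
        | (rw [ha, hb]; exact he)
        | (rw [← ha, ← hb] at he; exact he)
        | (rw [ha, hb] at he; exact he)
        | (rw [← ha, ← hb]; exact he)

lemma mem_flip (hx : η x = false) (a : {z : Lam d ℓ // Function.update η x true z = false}) :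
    a.1 ≠ x ∧ η a.1 = false := by
  have h2 : Function.update η x true a.1 = false := a.2
  by_cases h : a.1 = x
  · rw [h, Function.update_self] at h2
    exact absurd h2 (by simp)
  · rw [Function.update_of_ne h] at h2
    exact ⟨h, h2⟩

lemma iso_flip (hN : ∀ z ∈ nbhd x, η z = true) (hx : η x = false)
    (b : {z : Lam d ℓ // η z = false}) : ¬ (emptyClusterGraph η).Adj ⟨x, hx⟩ b := by
  intro h
  unfold emptyClusterGraph at h
  rw [SimpleGraph.fromRel_adj] at h
  obtain ⟨hne, hr⟩ := h
  have hd1 : dist1 x b.1 := by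
    rcases hr with hr | hr
    · exact hr
    · unfold dist1
      rw [← hr]
      apply Finset.sum_congr rfl
      intro i _
      exact abs_sub_comm _ _
  have : η b.1 = true := hN b.1 (by simp [nbhd, hd1])
  rw [b.2] at this
  exact absurd this (by simp)

lemma cluster_flip (hx : η x = false) (hN : ∀ z ∈ nbhd x, η z = true) :
    clusterCount η = clusterCount (Function.update η x true) + 1 := by
  classical
  have hfv : ∀ a : {z : Lam d ℓ // Function.update η x true z = false}, η a.1 = false :=
    fun a => (mem_flip hx a).2
  have hfvne : ∀ a : {z : Lam d ℓ // Function.update η x true z = false}, a.1 ≠ x :=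
    fun a => (mem_flip hx a).1
  set φ : emptyClusterGraph (Function.update η x true) →g emptyClusterGraph η :=
    ⟨fun a => ⟨a.1, hfv a⟩,
     fun {a b} h => (adj_iff (⟨a.1, hfv a⟩ : {z : Lam d ℓ // η z = false}) ⟨b.1, hfv b⟩
       a b rfl rfl).mpr h⟩ with hφdef
  -- reachability from x collapses
  have hreach_x : ∀ b, (emptyClusterGraph η).Reachable ⟨x, hx⟩ b → b = ⟨x, hx⟩ := by
    intro b h
    obtain ⟨p⟩ := h
    match p with
    | SimpleGraph.Walk.nil => rfl
    | SimpleGraph.Walk.cons h _ => exact absurd h (iso_flip hN hx _)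
  -- walks in G₀ avoiding x descend to G₁
  have hdescend : ∀ (a b : {z : Lam d ℓ // η z = false}) (p : (emptyClusterGraph η).Walk a b)
      (ha : a.1 ≠ x) (hb : b.1 ≠ x),
      (emptyClusterGraph (Function.update η x true)).Reachable
        ⟨a.1, by rw [Function.update_of_ne ha]; exact a.2⟩
        ⟨b.1, by rw [Function.update_of_ne hb]; exact b.2⟩ := by
    intro a b p
    induction p with
    | nil => intro _ _; rfl
    | @cons u v t huv p ih =>
      intro ha hb
      have hvx : v.1 ≠ x := by
        intro he
        have hve : v = (⟨x, hx⟩ : {z : Lam d ℓ // η z = false}) := Subtype.ext he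
        rw [hve] at huv
        exact iso_flip hN hx u huv.symm
      have hu : Function.update η x true u.1 = false := by
        rw [Function.update_of_ne ha]; exact u.2
      have hv : Function.update η x true v.1 = false := by
        rw [Function.update_of_ne hvx]; exact v.2
      refine SimpleGraph.Reachable.trans ?_ (ih hvx hb)
      apply SimpleGraph.Adj.reachable
      exact (adj_iff (η := η) (η' := Function.update η x true) u v ⟨u.1, hu⟩
        ⟨v.1, hv⟩ rfl rfl).mp huv
  -- the bijection on components
  set Ψ : (emptyClusterGraph (Function.update η x true)).ConnectedComponent ⊕ Unit →
      (emptyClusterGraph η).ConnectedComponent :=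
    Sum.elim (SimpleGraph.ConnectedComponent.map φ)
      (fun _ => (emptyClusterGraph η).connectedComponentMk ⟨x, hx⟩) with hΨdef
  have hinj : Function.Injective Ψ := by
    rintro (c | u) (c' | u') h
    · obtain ⟨a, rfl⟩ := c.exists_rep
      obtain ⟨b, rfl⟩ := c'.exists_rep
      rw [hΨdef] at h
      change (emptyClusterGraph η).connectedComponentMk (φ a) = (emptyClusterGraph η).connectedComponentMk (φ b) at h
      have hreach := (SimpleGraph.ConnectedComponent.eq).mp h
      obtain ⟨p⟩ := hreach
      exact congrArg Sum.inl
        (SimpleGraph.ConnectedComponent.sound (hdescend (φ a) (φ b) p (hfvne a) (hfvne b)))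
    · exfalso
      rw [hΨdef] at h
      simp only [Sum.elim_inl, Sum.elim_inr] at h
      obtain ⟨a, rfl⟩ := c.exists_rep
      have hr : (emptyClusterGraph η).Reachable (φ a) ⟨x, hx⟩ :=
        (SimpleGraph.ConnectedComponent.eq).mp h
      have := hreach_x (φ a) hr.symm
      exact hfvne a (congrArg Subtype.val this)
    · exfalso
      rw [hΨdef] at h
      simp only [Sum.elim_inl, Sum.elim_inr] at h
      obtain ⟨a, rfl⟩ := c'.exists_rep
      have hr : (emptyClusterGraph η).Reachable ⟨x, hx⟩ (φ a) :=
        (SimpleGraph.ConnectedComponent.eq).mp h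
      have := hreach_x (φ a) hr
      exact hfvne a (congrArg Subtype.val this)
    · rfl
  have hsurj : Function.Surjective Ψ := by
    intro c
    obtain ⟨v, rfl⟩ := c.exists_rep
    by_cases hvx : v.1 = x
    · refine ⟨Sum.inr (), ?_⟩
      rw [hΨdef]
      simp only [Sum.elim_inr]
      congr 1
      exact (Subtype.ext hvx).symm
    · refine ⟨Sum.inl ((emptyClusterGraph (Function.update η x true)).connectedComponentMk
        ⟨v.1, by rw [Function.update_of_ne hvx]; exact v.2⟩), ?_⟩
      rw [hΨdef]
      simp only [Sum.elim_inl, SimpleGraph.ConnectedComponent.map_mk]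
      congr 1
  have hcard := Nat.card_eq_of_bijective Ψ ⟨hinj, hsurj⟩
  unfold clusterCount
  rw [← hcard, Nat.card_sum]
  simp
end Flip

lemma merge_update (x : Lam d ℓ) (ρ) :
    Function.update (merge x ρ false) x true = merge x ρ true := by
  funext z
  by_cases h : z = x
  · subst h
    rw [Function.update_self, merge_self]
  · rw [Function.update_of_ne h, merge_ne x ρ _ h, merge_ne x ρ _ h]

lemma sum_mu_f_s (q : ℝ) (x : Lam d ℓ) :
    ∑ η : Conf d ℓ, mu q η * ((clusterCount η : ℝ) * s q x η) = q * (1 - q) * Ix q x := by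
  rw [sum_split x, Ix_eq, Finset.mul_sum]
  apply Finset.sum_congr rfl
  intro ρ _
  rw [mu_merge, mu_merge, s_merge, s_merge]
  set P := ∏ z : {z : Lam d ℓ // z ≠ x}, w q (ρ z) with hP
  set I := ind x (merge x ρ false) with hI
  have key : I * (clusterCount (merge x ρ false) : ℝ) =
      I * ((clusterCount (merge x ρ true) : ℝ) + 1) := by
    by_cases hcond : ∀ z ∈ nbhd x, merge x ρ false z = true
    · have hflip := cluster_flip (merge_self x ρ false) hcond
      rw [merge_update] at hflip
      rw [hflip]
      push_cast
      ring
    · have : I = 0 := by rw [hI]; unfold ind; rw [if_neg hcond]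
      rw [this, zero_mul, zero_mul]
  simp only [w, Bool.false_eq_true, if_false, if_true, ite_false, ite_true]
  linear_combination (q * (1 - q) * P) * key

end VarAux

/-- the variance of the cluster-count function is at least
`q(1−q)^{2d+1} · |3ℤ^d ∩ Λ|`. -/
theorem var_clusterCount_ge (d ℓ : ℕ) (hd : 1 ≤ d) (q : ℝ) (hq0 : 0 < q) (hq1 : q < 1) :
    boxVar d ℓ q (fun η => (clusterCount η : ℝ)) ≥
      q * (1 - q) ^ (2 * d + 1) *
        ((Finset.univ.filter fun x : Fin d → Fin ℓ => ∀ i, 3 ∣ (x i : ℕ)).card : ℝ) := by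
  classical
  open VarAux in
  set Gs := (Finset.univ.filter fun x : Fin d → Fin ℓ => ∀ i, 3 ∣ (x i : ℕ)) with hGsdef
  set fc : Conf d ℓ → ℝ := fun η => (clusterCount η : ℝ) with hfc
  set u : Conf d ℓ → ℝ := fun η => ∑ x ∈ Gs, s q x η with hu
  set A : ℝ := ∑ x ∈ Gs, Ix q x with hA
  set Ef : ℝ := boxExp d ℓ q fc with hEf
  have hq1' : (0:ℝ) ≤ 1 - q := by linarith
  have hmunn : ∀ η : Conf d ℓ, 0 ≤ mu q η := mu_nonneg (le_of_lt hq0) (le_of_lt hq1)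
  have hboxVar : boxVar d ℓ q fc = ∑ η : Conf d ℓ, mu q η * (fc η - Ef)^2 := rfl
  have hV0 : 0 ≤ boxVar d ℓ q fc := by
    rw [hboxVar]
    exact Finset.sum_nonneg fun η _ => mul_nonneg (hmunn η) (sq_nonneg _)
  -- expectation of u is zero
  have ha : ∑ η : Conf d ℓ, mu q η * u η = 0 := by
    calc ∑ η : Conf d ℓ, mu q η * u η
        = ∑ η : Conf d ℓ, ∑ x ∈ Gs, mu q η * s q x η :=
          Finset.sum_congr rfl fun η _ => Finset.mul_sum _ _ _
      _ = ∑ x ∈ Gs, ∑ η : Conf d ℓ, mu q η * s q x η := Finset.sum_comm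
      _ = 0 := Finset.sum_eq_zero fun x _ => sum_mu_s q x
  -- correlation with f
  have hb : ∑ η : Conf d ℓ, mu q η * (fc η * u η) = q * (1 - q) * A := by
    calc ∑ η : Conf d ℓ, mu q η * (fc η * u η)
        = ∑ η : Conf d ℓ, ∑ x ∈ Gs, mu q η * (fc η * s q x η) := by
          apply Finset.sum_congr rfl
          intro η _
          rw [hu]
          simp only []
          rw [Finset.mul_sum, Finset.mul_sum]
      _ = ∑ x ∈ Gs, ∑ η : Conf d ℓ, mu q η * (fc η * s q x η) := Finset.sum_comm
      _ = ∑ x ∈ Gs, q * (1 - q) * Ix q x :=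
          Finset.sum_congr rfl fun x _ => sum_mu_f_s q x
      _ = q * (1 - q) * A := by rw [hA, Finset.mul_sum]
  -- second moment of u
  have hcross : ∀ x ∈ Gs, ∀ y ∈ Gs,
      (∑ η : Conf d ℓ, mu q η * (s q x η * s q y η)) =
        if y = x then q * (1 - q) * Ix q x else 0 := by
    intro x hx y hy
    by_cases hxy : y = x
    · subst hxy
      rw [if_pos rfl]
      exact sum_mu_s_sq q y
    · rw [if_neg hxy]
      rw [hGsdef, Finset.mem_filter] at hx hy
      exact sum_mu_s_cross q hx.2 hy.2 (fun he => hxy he.symm)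
  have hc : ∑ η : Conf d ℓ, mu q η * (u η * u η) = q * (1 - q) * A := by
    calc ∑ η : Conf d ℓ, mu q η * (u η * u η)
        = ∑ η : Conf d ℓ, ∑ x ∈ Gs, ∑ y ∈ Gs, mu q η * (s q x η * s q y η) := by
          apply Finset.sum_congr rfl
          intro η _
          rw [hu]
          simp only []
          rw [Finset.sum_mul_sum, Finset.mul_sum]
          exact Finset.sum_congr rfl fun x _ => Finset.mul_sum _ _ _
      _ = ∑ x ∈ Gs, ∑ η : Conf d ℓ, ∑ y ∈ Gs, mu q η * (s q x η * s q y η) := Finset.sum_comm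
      _ = ∑ x ∈ Gs, ∑ y ∈ Gs, ∑ η : Conf d ℓ, mu q η * (s q x η * s q y η) :=
          Finset.sum_congr rfl fun x _ => Finset.sum_comm
      _ = ∑ x ∈ Gs, ∑ y ∈ Gs, (if y = x then q * (1 - q) * Ix q x else 0) :=
          Finset.sum_congr rfl fun x hx => Finset.sum_congr rfl fun y hy => hcross x hx y hy
      _ = ∑ x ∈ Gs, q * (1 - q) * Ix q x := by
          apply Finset.sum_congr rfl
          intro x hx
          rw [Finset.sum_ite_eq' Gs x (fun _ => q * (1 - q) * Ix q x), if_pos hx]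
      _ = q * (1 - q) * A := by rw [hA, Finset.mul_sum]
  -- Cauchy-Schwarz
  set av : Conf d ℓ → ℝ := fun η => Real.sqrt (mu q η) * (fc η - Ef) with hav
  set bv : Conf d ℓ → ℝ := fun η => Real.sqrt (mu q η) * u η with hbv
  have hsqrt : ∀ η : Conf d ℓ, Real.sqrt (mu q η) * Real.sqrt (mu q η) = mu q η :=
    fun η => Real.mul_self_sqrt (hmunn η)
  have hCS := Finset.sum_mul_sq_le_sq_mul_sq Finset.univ av bv
  have hab : ∑ η : Conf d ℓ, av η * bv η = q * (1 - q) * A := by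
    have h1 : ∀ η : Conf d ℓ, av η * bv η = mu q η * (fc η * u η) - Ef * (mu q η * u η) := by
      intro η
      rw [hav, hbv]
      simp only []
      calc Real.sqrt (mu q η) * (fc η - Ef) * (Real.sqrt (mu q η) * u η)
          = Real.sqrt (mu q η) * Real.sqrt (mu q η) * ((fc η - Ef) * u η) := by ring
        _ = mu q η * ((fc η - Ef) * u η) := by rw [hsqrt η]
        _ = mu q η * (fc η * u η) - Ef * (mu q η * u η) := by ring
    rw [Finset.sum_congr rfl fun η _ => h1 η, Finset.sum_sub_distrib, hb, ← Finset.mul_sum, ha]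
    ring
  have ha2 : ∑ η : Conf d ℓ, av η ^ 2 = boxVar d ℓ q fc := by
    rw [hboxVar]
    apply Finset.sum_congr rfl
    intro η _
    rw [hav]
    simp only []
    calc (Real.sqrt (mu q η) * (fc η - Ef)) ^ 2
        = Real.sqrt (mu q η) * Real.sqrt (mu q η) * (fc η - Ef) ^ 2 := by ring
      _ = mu q η * (fc η - Ef) ^ 2 := by rw [hsqrt η]
  have hb2 : ∑ η : Conf d ℓ, bv η ^ 2 = q * (1 - q) * A := by
    rw [← hc]
    apply Finset.sum_congr rfl
    intro η _
    rw [hbv]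
    simp only []
    calc (Real.sqrt (mu q η) * u η) ^ 2
        = Real.sqrt (mu q η) * Real.sqrt (mu q η) * (u η * u η) := by ring
      _ = mu q η * (u η * u η) := by rw [hsqrt η]
  rw [hab, ha2, hb2] at hCS
  -- lower bound on A
  have hA_lb : ((1 - q) ^ (2 * d)) * (Gs.card : ℝ) ≤ A := by
    rw [hA]
    calc ((1 - q) ^ (2 * d)) * (Gs.card : ℝ) = ∑ _x ∈ Gs, ((1 - q) ^ (2 * d)) := by
          rw [Finset.sum_const, nsmul_eq_mul]
          ring
      _ ≤ ∑ x ∈ Gs, Ix q x := by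
          apply Finset.sum_le_sum
          intro x _
          rw [Ix_val]
          exact pow_le_pow_of_le_one hq1' (by linarith) (nbhd_card_le hd x)
  by_cases hcard : Gs.card = 0
  · rw [hcard]
    simpa using hV0
  · have hcardpos : (0:ℝ) < (Gs.card : ℝ) := by
      have : 0 < Gs.card := Nat.pos_of_ne_zero hcard
      exact_mod_cast this
    have hApos : 0 < A :=
      lt_of_lt_of_le (mul_pos (pow_pos (by linarith : (0:ℝ) < 1 - q) _) hcardpos) hA_lb
    have hcpos : 0 < q * (1 - q) * A := by
      apply mul_pos (mul_pos hq0 (by linarith)) hApos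
    have hVge : q * (1 - q) * A ≤ boxVar d ℓ q fc := by
      have := hCS
      nlinarith [hcpos]
    calc q * (1 - q) ^ (2 * d + 1) * (Gs.card : ℝ)
        = (q * (1 - q)) * ((1 - q) ^ (2 * d) * (Gs.card : ℝ)) := by ring
      _ ≤ (q * (1 - q)) * A := by
          apply mul_le_mul_of_nonneg_left hA_lb
          positivity
      _ ≤ boxVar d ℓ q fc := by
          calc q * (1 - q) * A ≤ boxVar d ℓ q fc := hVge
end
end

section
/- Let d ≥ 3. The spectral gap of the FA1f model on ℤ^d satisfies gap(L) ≤ C q² for small q, where C depends only on d. -/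
open Finset

noncomputable section

/-- The configuration `η` flipped at the site `x`. -/
def flipCfg {d : ℕ} (η : (Fin d → ℤ) → Bool) (x : Fin d → ℤ) : (Fin d → ℤ) → Bool :=
  fun y => if y = x then !(η y) else η y

/-- The nearest neighbours of a site `x ∈ ℤ^d`. -/
def latNbrs {d : ℕ} (x : Fin d → ℤ) : Finset (Fin d → ℤ) :=
  Finset.univ.biUnion fun i : Fin d =>
    {Function.update x i (x i + 1), Function.update x i (x i - 1)}

/-- Extension of a configuration on a finite set of sites by fully occupied outside. -/
def extendCfg {d : ℕ} (s : Finset (Fin d → ℤ)) (η : ↥s → Bool) : (Fin d → ℤ) → Bool :=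
  fun x => if h : x ∈ s then η ⟨x, h⟩ else true

/-- Expectation, under the product Bernoulli(1−q) measure (`true` = occupied, probability
`1−q`; `false` = empty, probability `q`), of a function depending only on the sites in the
finite set `s`. -/
def Eloc {d : ℕ} (q : ℝ) (s : Finset (Fin d → ℤ)) (g : ((Fin d → ℤ) → Bool) → ℝ) : ℝ :=
  ∑ η : ↥s → Bool, (∏ v : ↥s, if η v then (1 - q) else q) * g (extendCfg s η)

/-- The FA1f constraint at `x` (as a real indicator): some nearest neighbour of `x` is empty. -/
def cInd {d : ℕ} (η : (Fin d → ℤ) → Bool) (x : Fin d → ℤ) : ℝ :=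
  if ∃ y ∈ latNbrs x, η y = false then 1 else 0

/-- The FA1f Dirichlet form `D(f) = q(1−q) Σ_x μ(c_x (f(η^x) − f(η))²)` of a function `f`
depending only on the sites in the finite set `s`. -/
def Dform {d : ℕ} (q : ℝ) (s : Finset (Fin d → ℤ)) (f : ((Fin d → ℤ) → Bool) → ℝ) : ℝ :=
  q * (1 - q) * ∑' x : Fin d → ℤ,
    Eloc q (s ∪ insert x (latNbrs x))
      (fun η => cInd η x * (f (flipCfg η x) - f η) ^ 2)

/-- `f` depends only on the sites in `s`. -/
def localOn {d : ℕ} (s : Finset (Fin d → ℤ)) (f : ((Fin d → ℤ) → Bool) → ℝ) : Prop :=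
  ∀ η η' : (Fin d → ℤ) → Bool, (∀ x ∈ s, η x = η' x) → f η = f η'

/-- Variance of a function depending only on the sites in `s`. -/
def Varloc {d : ℕ} (q : ℝ) (s : Finset (Fin d → ℤ)) (f : ((Fin d → ℤ) → Bool) → ℝ) : ℝ :=
  Eloc q s fun η => (f η - Eloc q s f) ^ 2

/-- The spectral gap of the FA1f model on `ℤ^d`, via its variational characterization
`gap(L) = inf_f D(f)/Var_μ(f)` over local non-constant functions `f`. -/
def gapFA (d : ℕ) (q : ℝ) : ℝ :=
  sInf {r : ℝ | ∃ (s : Finset (Fin d → ℤ)) (f : ((Fin d → ℤ) → Bool) → ℝ),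
    localOn s f ∧ Varloc q s f ≠ 0 ∧ r = Dform q s f / Varloc q s f}

namespace FA1fAux

variable {d : ℕ}

/-- Vacancy indicator of a boolean. -/
def nB : Bool → ℝ := fun b => if b then 0 else 1

lemma nB_nonneg (b : Bool) : 0 ≤ nB b := by cases b <;> simp [nB]

lemma nB_le_one (b : Bool) : nB b ≤ 1 := by cases b <;> simp [nB]

lemma nB_mul_self (b : Bool) : nB b * nB b = nB b := by cases b <;> simp [nB]

/-- The weight of a local configuration. -/
def W (q : ℝ) {u : Finset (Fin d → ℤ)} (η : ↥u → Bool) : ℝ :=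
  ∏ v : ↥u, if η v then (1 - q) else q

lemma W_nonneg {q : ℝ} (h0 : 0 ≤ q) (h1 : q ≤ 1) {u : Finset (Fin d → ℤ)}
    (η : ↥u → Bool) : 0 ≤ W q η :=
  Finset.prod_nonneg fun v _ => by split <;> linarith

lemma Eloc_eq_sum (q : ℝ) (u : Finset (Fin d → ℤ)) (g : ((Fin d → ℤ) → Bool) → ℝ) :
    Eloc q u g = ∑ η : ↥u → Bool, W q η * g (extendCfg u η) := rfl

lemma extendCfg_mem {u : Finset (Fin d → ℤ)} (η : ↥u → Bool) {y : Fin d → ℤ}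
    (hy : y ∈ u) : extendCfg u η y = η ⟨y, hy⟩ := dif_pos hy

lemma sum_boolfn_prod {α : Type*} [Fintype α] [DecidableEq α] (h : α → Bool → ℝ) :
    ∑ η : α → Bool, ∏ v, h v (η v) = ∏ v, (h v true + h v false) := by
  rw [← Fintype.prod_sum fun v b => h v b]
  exact Finset.prod_congr rfl fun v _ => by simp

/-- Factorization of `Eloc` over per-site factors. -/
lemma Eloc_prod_eval (q : ℝ) (u : Finset (Fin d → ℤ)) (φ : (Fin d → ℤ) → Bool → ℝ) :
    Eloc q u (fun ξ => ∏ y ∈ u, φ y (ξ y)) =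
      ∏ y ∈ u, ((1 - q) * φ y true + q * φ y false) := by
  rw [Eloc_eq_sum]
  have h1 : ∀ η : ↥u → Bool,
      (∏ y ∈ u, φ y (extendCfg u η y)) = ∏ v : ↥u, φ (↑v) (η v) := by
    intro η
    rw [← Finset.prod_coe_sort u (fun y => φ y (extendCfg u η y))]
    exact Finset.prod_congr rfl fun v _ => by
      rw [extendCfg_mem η v.2]
  calc ∑ η : ↥u → Bool, W q η * ∏ y ∈ u, φ y (extendCfg u η y)
      = ∑ η : ↥u → Bool, ∏ v : ↥u, ((if η v then (1 - q) else q) * φ (↑v) (η v)) := by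
        refine Finset.sum_congr rfl fun η _ => ?_
        rw [h1 η, W, ← Finset.prod_mul_distrib]
    _ = ∏ v : ↥u, ((1 - q) * φ (↑v) true + q * φ (↑v) false) := by
        rw [sum_boolfn_prod fun (v : ↥u) (b : Bool) => (if b then (1 - q) else q) * φ (↑v) b]
        simp
    _ = ∏ y ∈ u, ((1 - q) * φ y true + q * φ y false) :=
        Finset.prod_coe_sort u (fun y => (1 - q) * φ y true + q * φ y false)

/-- Expectation of a monomial of vacancy indicators. -/
lemma Eloc_monomial (q : ℝ) {u T : Finset (Fin d → ℤ)} (hT : T ⊆ u) :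
    Eloc q u (fun ξ => ∏ y ∈ T, nB (ξ y)) = q ^ T.card := by
  have h2 : (fun ξ : (Fin d → ℤ) → Bool => ∏ y ∈ T, nB (ξ y)) =
      fun ξ => ∏ y ∈ u, (fun y b => if y ∈ T then nB b else 1) y (ξ y) := by
    funext ξ
    calc ∏ y ∈ T, nB (ξ y) = ∏ y ∈ T, (if y ∈ T then nB (ξ y) else 1) :=
          (Finset.prod_congr rfl fun y hy => by rw [if_pos hy]).symm
      _ = ∏ y ∈ u, (if y ∈ T then nB (ξ y) else 1) :=
          Finset.prod_subset hT (fun y _ hy => if_neg hy)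
  rw [h2, Eloc_prod_eval q u (fun y b => if y ∈ T then nB b else 1)]
  have h3 : ∀ y, ((1 - q) * (if y ∈ T then nB true else 1)
      + q * (if y ∈ T then nB false else 1)) = if y ∈ T then q else 1 := by
    intro y; split <;> simp [nB]
  rw [Finset.prod_congr rfl fun y _ => h3 y]
  calc ∏ y ∈ u, (if y ∈ T then q else 1)
      = ∏ y ∈ T, (if y ∈ T then q else 1) :=
        (Finset.prod_subset hT (fun y _ hy => if_neg hy)).symm
    _ = ∏ _y ∈ T, q := Finset.prod_congr rfl fun y hy => if_pos hy
    _ = q ^ T.card := Finset.prod_const q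

/-- Expectation of a monomial of occupation indicators. -/
lemma Eloc_omonomial (q : ℝ) {u T : Finset (Fin d → ℤ)} (hT : T ⊆ u) :
    Eloc q u (fun ξ => ∏ y ∈ T, (1 - nB (ξ y))) = (1 - q) ^ T.card := by
  have h2 : (fun ξ : (Fin d → ℤ) → Bool => ∏ y ∈ T, (1 - nB (ξ y))) =
      fun ξ => ∏ y ∈ u, (fun y b => if y ∈ T then 1 - nB b else 1) y (ξ y) := by
    funext ξ
    calc ∏ y ∈ T, (1 - nB (ξ y)) = ∏ y ∈ T, (if y ∈ T then 1 - nB (ξ y) else 1) :=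
          (Finset.prod_congr rfl fun y hy => by rw [if_pos hy]).symm
      _ = ∏ y ∈ u, (if y ∈ T then 1 - nB (ξ y) else 1) :=
          Finset.prod_subset hT (fun y _ hy => if_neg hy)
  rw [h2, Eloc_prod_eval q u (fun y b => if y ∈ T then 1 - nB b else 1)]
  have h3 : ∀ y, ((1 - q) * (if y ∈ T then 1 - nB true else 1)
      + q * (if y ∈ T then 1 - nB false else 1)) = if y ∈ T then 1 - q else 1 := by
    intro y; split <;> simp [nB]
  rw [Finset.prod_congr rfl fun y _ => h3 y]
  calc ∏ y ∈ u, (if y ∈ T then 1 - q else 1)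
      = ∏ y ∈ T, (if y ∈ T then 1 - q else 1) :=
        (Finset.prod_subset hT (fun y _ hy => if_neg hy)).symm
    _ = ∏ _y ∈ T, (1 - q) := Finset.prod_congr rfl fun y hy => if_pos hy
    _ = (1 - q) ^ T.card := Finset.prod_const _

lemma Eloc_one (q : ℝ) (u : Finset (Fin d → ℤ)) : Eloc q u (fun _ => 1) = 1 := by
  have := Eloc_monomial q (Finset.empty_subset u)
  simpa using this


section Linearity

variable (q : ℝ) (u : Finset (Fin d → ℤ))

lemma Eloc_add (g h : ((Fin d → ℤ) → Bool) → ℝ) :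
    Eloc q u (fun ξ => g ξ + h ξ) = Eloc q u g + Eloc q u h := by
  simp [Eloc_eq_sum, mul_add, Finset.sum_add_distrib]

lemma Eloc_sub (g h : ((Fin d → ℤ) → Bool) → ℝ) :
    Eloc q u (fun ξ => g ξ - h ξ) = Eloc q u g - Eloc q u h := by
  simp [Eloc_eq_sum, mul_sub, Finset.sum_sub_distrib]

lemma Eloc_const_mul (c : ℝ) (g : ((Fin d → ℤ) → Bool) → ℝ) :
    Eloc q u (fun ξ => c * g ξ) = c * Eloc q u g := by
  simp [Eloc_eq_sum, Finset.mul_sum, mul_left_comm]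

lemma Eloc_mul_const (c : ℝ) (g : ((Fin d → ℤ) → Bool) → ℝ) :
    Eloc q u (fun ξ => g ξ * c) = Eloc q u g * c := by
  simp [Eloc_eq_sum, Finset.sum_mul, mul_assoc]

lemma Eloc_const (c : ℝ) : Eloc q u (fun _ => c) = c := by
  have h := Eloc_mul_const q u c (fun _ => 1)
  simpa [Eloc_one] using h

lemma Eloc_fsum {β : Type*} (A : Finset β) (g : β → ((Fin d → ℤ) → Bool) → ℝ) :
    Eloc q u (fun ξ => ∑ a ∈ A, g a ξ) = ∑ a ∈ A, Eloc q u (g a) := by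
  simp only [Eloc_eq_sum, Finset.mul_sum]
  rw [Finset.sum_comm]

lemma Eloc_mono {q : ℝ} (h0 : 0 ≤ q) (h1 : q ≤ 1) {u : Finset (Fin d → ℤ)}
    {g h : ((Fin d → ℤ) → Bool) → ℝ} (hgh : ∀ ξ, g ξ ≤ h ξ) :
    Eloc q u g ≤ Eloc q u h := by
  rw [Eloc_eq_sum, Eloc_eq_sum]
  exact Finset.sum_le_sum fun η _ =>
    mul_le_mul_of_nonneg_left (hgh _) (W_nonneg h0 h1 η)

lemma Eloc_nonneg {q : ℝ} (h0 : 0 ≤ q) (h1 : q ≤ 1) {u : Finset (Fin d → ℤ)}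
    {g : ((Fin d → ℤ) → Bool) → ℝ} (hg : ∀ ξ, 0 ≤ g ξ) :
    0 ≤ Eloc q u g := by
  have := Eloc_mono (d := d) h0 h1 (u := u) (g := fun _ => 0) (h := g) (fun ξ => hg ξ)
  simpa [Eloc_const] using this

end Linearity

section SmallMonomials

variable (q : ℝ) {u : Finset (Fin d → ℤ)}

lemma Eloc_nB {x : Fin d → ℤ} (hx : x ∈ u) :
    Eloc q u (fun ξ => nB (ξ x)) = q := by
  have h := Eloc_monomial q (u := u) (T := {x}) (by simpa using hx)
  simpa using h

lemma Eloc_nB_nB {x y : Fin d → ℤ} (hx : x ∈ u) (hy : y ∈ u) :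
    Eloc q u (fun ξ => nB (ξ x) * nB (ξ y)) = if x = y then q else q ^ 2 := by
  by_cases hxy : x = y
  · subst hxy
    rw [if_pos rfl]
    have h1 : (fun ξ : (Fin d → ℤ) → Bool => nB (ξ x) * nB (ξ x)) =
        fun ξ => nB (ξ x) := by funext ξ; exact nB_mul_self _
    rw [h1, Eloc_nB q hx]
  · rw [if_neg hxy]
    have hT : ({x, y} : Finset (Fin d → ℤ)) ⊆ u := by
      intro z hz; rcases Finset.mem_insert.mp hz with h | h
      · exact h ▸ hx
      · exact (Finset.mem_singleton.mp h) ▸ hy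
    have h := Eloc_monomial q hT
    rw [Finset.card_pair hxy] at h
    have h1 : (fun ξ : (Fin d → ℤ) → Bool => ∏ z ∈ ({x, y} : Finset (Fin d → ℤ)), nB (ξ z)) =
        fun ξ => nB (ξ x) * nB (ξ y) := by
      funext ξ; rw [Finset.prod_pair hxy]
    rw [h1] at h
    exact h

lemma Eloc_nB3 {x y v : Fin d → ℤ} (hxy : x ≠ y) (hx : x ∈ u) (hy : y ∈ u) (hv : v ∈ u) :
    Eloc q u (fun ξ => nB (ξ x) * nB (ξ y) * nB (ξ v)) =
      if v = x ∨ v = y then q ^ 2 else q ^ 3 := by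
  by_cases hvx : v = x
  · subst hvx
    rw [if_pos (Or.inl rfl)]
    have h1 : (fun ξ : (Fin d → ℤ) → Bool => nB (ξ v) * nB (ξ y) * nB (ξ v)) =
        fun ξ => nB (ξ v) * nB (ξ y) := by
      funext ξ
      calc nB (ξ v) * nB (ξ y) * nB (ξ v) = (nB (ξ v) * nB (ξ v)) * nB (ξ y) := by ring
        _ = nB (ξ v) * nB (ξ y) := by rw [nB_mul_self]
    rw [h1, Eloc_nB_nB q hv hy, if_neg hxy]
  · by_cases hvy : v = y
    · subst hvy
      rw [if_pos (Or.inr rfl)]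
      have h1 : (fun ξ : (Fin d → ℤ) → Bool => nB (ξ x) * nB (ξ v) * nB (ξ v)) =
          fun ξ => nB (ξ x) * nB (ξ v) := by
        funext ξ
        calc nB (ξ x) * nB (ξ v) * nB (ξ v) = nB (ξ x) * (nB (ξ v) * nB (ξ v)) := by ring
          _ = nB (ξ x) * nB (ξ v) := by rw [nB_mul_self]
      rw [h1, Eloc_nB_nB q hx hv, if_neg hxy]
    · rw [if_neg (by tauto)]
      have hyv : y ∉ ({v} : Finset (Fin d → ℤ)) := by
        simp only [Finset.mem_singleton]
        exact fun h => hvy h.symm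
      have hxyv : x ∉ ({y, v} : Finset (Fin d → ℤ)) := by
        simp only [Finset.mem_insert, Finset.mem_singleton]
        push_neg
        exact ⟨hxy, fun h => hvx h.symm⟩
      have hT : ({x, y, v} : Finset (Fin d → ℤ)) ⊆ u := by
        intro z hz
        rcases Finset.mem_insert.mp hz with h | hz2
        · exact h ▸ hx
        rcases Finset.mem_insert.mp hz2 with h | h
        · exact h ▸ hy
        · exact (Finset.mem_singleton.mp h) ▸ hv
      have h := Eloc_monomial q hT
      have hcard : ({x, y, v} : Finset (Fin d → ℤ)).card = 3 := by
        rw [Finset.card_insert_of_notMem hxyv, Finset.card_insert_of_notMem hyv,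
          Finset.card_singleton]
      rw [hcard] at h
      have h1 : (fun ξ : (Fin d → ℤ) → Bool =>
          ∏ z ∈ ({x, y, v} : Finset (Fin d → ℤ)), nB (ξ z)) =
          fun ξ => nB (ξ x) * nB (ξ y) * nB (ξ v) := by
        funext ξ
        rw [Finset.prod_insert hxyv, Finset.prod_insert hyv, Finset.prod_singleton, mul_assoc]
      rw [h1] at h
      exact h

end SmallMonomials

/-- Cauchy–Schwarz inequality for `Eloc`. -/
lemma Eloc_cauchy {q : ℝ} (h0 : 0 ≤ q) (h1 : q ≤ 1) (u : Finset (Fin d → ℤ))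
    (g h : ((Fin d → ℤ) → Bool) → ℝ) :
    (Eloc q u (fun ξ => g ξ * h ξ)) ^ 2 ≤
      Eloc q u (fun ξ => g ξ ^ 2) * Eloc q u (fun ξ => h ξ ^ 2) := by
  rw [Eloc_eq_sum, Eloc_eq_sum, Eloc_eq_sum]
  have key : ∀ η : ↥u → Bool, W q η * (g (extendCfg u η) * h (extendCfg u η)) =
      (Real.sqrt (W q η) * g (extendCfg u η)) * (Real.sqrt (W q η) * h (extendCfg u η)) := by
    intro η
    have : Real.sqrt (W q η) * Real.sqrt (W q η) = W q η :=
      Real.mul_self_sqrt (W_nonneg h0 h1 η)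
    calc W q η * (g (extendCfg u η) * h (extendCfg u η))
        = (Real.sqrt (W q η) * Real.sqrt (W q η)) * (g (extendCfg u η) * h (extendCfg u η)) := by
          rw [this]
      _ = (Real.sqrt (W q η) * g (extendCfg u η)) * (Real.sqrt (W q η) * h (extendCfg u η)) := by
          ring
  have keysq : ∀ (a : ((Fin d → ℤ) → Bool) → ℝ) (η : ↥u → Bool),
      (Real.sqrt (W q η) * a (extendCfg u η)) ^ 2 = W q η * a (extendCfg u η) ^ 2 := by
    intro a η
    rw [mul_pow, Real.sq_sqrt (W_nonneg h0 h1 η)]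
  calc (∑ η : ↥u → Bool, W q η * (g (extendCfg u η) * h (extendCfg u η))) ^ 2
      = (∑ η : ↥u → Bool, (Real.sqrt (W q η) * g (extendCfg u η)) *
          (Real.sqrt (W q η) * h (extendCfg u η))) ^ 2 := by
        rw [Finset.sum_congr rfl fun η _ => key η]
    _ ≤ (∑ η : ↥u → Bool, (Real.sqrt (W q η) * g (extendCfg u η)) ^ 2) *
          (∑ η : ↥u → Bool, (Real.sqrt (W q η) * h (extendCfg u η)) ^ 2) :=
        Finset.sum_mul_sq_le_sq_mul_sq _ _ _
    _ = (∑ η : ↥u → Bool, W q η * g (extendCfg u η) ^ 2) *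
          (∑ η : ↥u → Bool, W q η * h (extendCfg u η) ^ 2) := by
        rw [Finset.sum_congr rfl fun η _ => keysq g η,
          Finset.sum_congr rfl fun η _ => keysq h η]


section Lattice

variable {z x : Fin d → ℤ} {i j : Fin d}

/-- Forward neighbour. -/
def zp (z : Fin d → ℤ) (i : Fin d) : Fin d → ℤ := Function.update z i (z i + 1)

/-- Backward neighbour. -/
def zm (z : Fin d → ℤ) (i : Fin d) : Fin d → ℤ := Function.update z i (z i - 1)

lemma zp_apply (z : Fin d → ℤ) (i j : Fin d) :
    zp z i j = if j = i then z i + 1 else z j := Function.update_apply z i (z i + 1) j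

lemma zm_apply (z : Fin d → ℤ) (i j : Fin d) :
    zm z i j = if j = i then z i - 1 else z j := Function.update_apply z i (z i - 1) j

lemma zp_ne_self (z : Fin d → ℤ) (i : Fin d) : zp z i ≠ z := by
  intro h
  have := congrFun h i
  rw [zp_apply, if_pos rfl] at this
  omega

lemma zm_ne_self (z : Fin d → ℤ) (i : Fin d) : zm z i ≠ z := by
  intro h
  have := congrFun h i
  rw [zm_apply, if_pos rfl] at this
  omega

lemma zp_ne_zm (z : Fin d → ℤ) (i j : Fin d) : zp z i ≠ zm z j := by
  intro h
  have hi := congrFun h i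
  rw [zp_apply, if_pos rfl, zm_apply] at hi
  by_cases hij : i = j
  · rw [if_pos hij] at hi; subst hij; omega
  · rw [if_neg hij] at hi; omega

lemma zp_ne_zp (z : Fin d → ℤ) (hij : i ≠ j) : zp z i ≠ zp z j := by
  intro h
  have hi := congrFun h i
  rw [zp_apply, if_pos rfl, zp_apply, if_neg hij] at hi
  omega

lemma zm_ne_zm (z : Fin d → ℤ) (hij : i ≠ j) : zm z i ≠ zm z j := by
  intro h
  have hi := congrFun h i
  rw [zm_apply, if_pos rfl, zm_apply, if_neg hij] at hi
  omega

lemma zp_zm (z : Fin d → ℤ) (i : Fin d) : zp (zm z i) i = z := by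
  unfold zp zm
  rw [show (Function.update z i (z i - 1)) i = z i - 1 from Function.update_self i _ z,
    Function.update_idem]
  rw [show z i - 1 + 1 = z i by ring, Function.update_eq_self]

lemma zm_zp (z : Fin d → ℤ) (i : Fin d) : zm (zp z i) i = z := by
  unfold zp zm
  rw [show (Function.update z i (z i + 1)) i = z i + 1 from Function.update_self i _ z,
    Function.update_idem]
  rw [show z i + 1 - 1 = z i by ring, Function.update_eq_self]

lemma zp_eq_iff (x z : Fin d → ℤ) (i : Fin d) : zp x i = z ↔ x = zm z i := by
  constructor
  · intro h; rw [← h, zm_zp]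
  · intro h; rw [h, zp_zm]

lemma latNbrs_eq (z : Fin d → ℤ) :
    latNbrs z = Finset.univ.biUnion fun i : Fin d => ({zp z i, zm z i} : Finset _) := rfl

lemma latNbrs_pairwiseDisjoint (z : Fin d → ℤ) :
    Set.PairwiseDisjoint ↑(Finset.univ : Finset (Fin d))
      (fun i => ({zp z i, zm z i} : Finset (Fin d → ℤ))) := by
  intro i _ j _ hij
  rw [Function.onFun, Finset.disjoint_left]
  intro a hai haj
  simp only [Finset.mem_insert, Finset.mem_singleton] at hai haj
  rcases hai with h | h <;> rcases haj with h' | h'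
  · exact zp_ne_zp z hij (h.symm.trans h')
  · exact zp_ne_zm z i j (h.symm.trans h')
  · exact zp_ne_zm z j i (h'.symm.trans h)
  · exact zm_ne_zm z hij (h.symm.trans h')

lemma sum_latNbrs (z : Fin d → ℤ) (g : (Fin d → ℤ) → ℝ) :
    ∑ y ∈ latNbrs z, g y = ∑ i : Fin d, (g (zp z i) + g (zm z i)) := by
  rw [latNbrs_eq, Finset.sum_biUnion (latNbrs_pairwiseDisjoint z)]
  exact Finset.sum_congr rfl fun i _ => Finset.sum_pair (zp_ne_zm z i i)

lemma card_latNbrs_le (z : Fin d → ℤ) : (latNbrs z).card ≤ 2 * d := by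
  rw [latNbrs_eq]
  refine le_trans (Finset.card_biUnion_le) ?_
  have : ∀ i : Fin d, ({zp z i, zm z i} : Finset (Fin d → ℤ)).card ≤ 2 := by
    intro i; rw [Finset.card_pair (zp_ne_zm z i i)]
  refine le_trans (Finset.sum_le_sum fun i _ => this i) ?_
  simp [mul_comm]

lemma mem_latNbrs {y z : Fin d → ℤ} :
    y ∈ latNbrs z ↔ ∃ i : Fin d, y = zp z i ∨ y = zm z i := by
  rw [latNbrs_eq]
  simp [Finset.mem_biUnion]

end Lattice

section TestFunction

lemma flipCfg_apply_self (ξ : (Fin d → ℤ) → Bool) (z : Fin d → ℤ) :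
    flipCfg ξ z z = !(ξ z) := if_pos rfl

lemma flipCfg_apply_ne (ξ : (Fin d → ℤ) → Bool) {y z : Fin d → ℤ} (h : y ≠ z) :
    flipCfg ξ z y = ξ y := if_neg h

lemma nB_not (b : Bool) : nB (!b) = 1 - nB b := by cases b <;> simp [nB]

/-- The test function. -/
def Ffun (s : Finset (Fin d → ℤ)) : ((Fin d → ℤ) → Bool) → ℝ := fun ξ =>
  (∑ x ∈ s, nB (ξ x)) -
    ∑ x ∈ s, ∑ i : Fin d, (if zp x i ∈ s then nB (ξ x) * nB (ξ (zp x i)) else 0)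

lemma Ffun_flip {s : Finset (Fin d → ℤ)} {z : Fin d → ℤ} (hz : z ∈ s)
    (ξ : (Fin d → ℤ) → Bool) :
    Ffun s (flipCfg ξ z) - Ffun s ξ =
      (1 - 2 * nB (ξ z)) *
        (1 - ∑ y ∈ latNbrs z, (if y ∈ s then nB (ξ y) else 0)) := by
  set ε := 1 - 2 * nB (ξ z) with hε
  have hA : (∑ x ∈ s, nB (flipCfg ξ z x)) - ∑ x ∈ s, nB (ξ x) = ε := by
    rw [← Finset.sum_sub_distrib]
    have hterm : ∀ x ∈ s, nB (flipCfg ξ z x) - nB (ξ x) = if x = z then ε else 0 := by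
      intro x _
      by_cases hxz : x = z
      · subst hxz
        rw [if_pos rfl, flipCfg_apply_self, nB_not, hε]; ring
      · rw [if_neg hxz, flipCfg_apply_ne ξ hxz, sub_self]
    rw [Finset.sum_congr rfl hterm, Finset.sum_ite_eq' s z (fun _ => ε), if_pos hz]
  have hpoint : ∀ x ∈ s, ∀ i : Fin d,
      (if zp x i ∈ s then nB (flipCfg ξ z x) * nB (flipCfg ξ z (zp x i)) else 0) -
        (if zp x i ∈ s then nB (ξ x) * nB (ξ (zp x i)) else 0) =
      (if x = z then (if zp z i ∈ s then ε * nB (ξ (zp z i)) else 0) else 0) +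
        (if x = zm z i then ε * nB (ξ x) else 0) := by
    intro x _ i
    by_cases hxz : x = z
    · subst hxz
      rw [if_pos rfl, if_neg (Ne.symm (zm_ne_self x i))]
      by_cases hzp : zp x i ∈ s
      · rw [if_pos hzp, if_pos hzp, if_pos hzp, flipCfg_apply_self, nB_not,
          flipCfg_apply_ne ξ (zp_ne_self x i), hε, add_zero]
        ring
      · rw [if_neg hzp, if_neg hzp, if_neg hzp, sub_zero, add_zero]
    · rw [if_neg hxz]
      by_cases hx2 : x = zm z i
      · subst hx2
        rw [if_pos rfl, zp_zm, if_pos hz, if_pos hz, zero_add,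
          flipCfg_apply_ne ξ hxz, flipCfg_apply_self, nB_not, hε]
        ring
      · have hzpz : zp x i ≠ z := fun h => hx2 ((zp_eq_iff x z i).mp h)
        rw [if_neg hx2, flipCfg_apply_ne ξ hxz, flipCfg_apply_ne ξ hzpz,
          sub_self, zero_add]
  have hB : (∑ x ∈ s, ∑ i : Fin d,
        (if zp x i ∈ s then nB (flipCfg ξ z x) * nB (flipCfg ξ z (zp x i)) else 0)) -
      (∑ x ∈ s, ∑ i : Fin d, (if zp x i ∈ s then nB (ξ x) * nB (ξ (zp x i)) else 0)) =
      ε * ∑ y ∈ latNbrs z, (if y ∈ s then nB (ξ y) else 0) := by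
    rw [← Finset.sum_sub_distrib]
    have hstep1 : ∀ x ∈ s,
        (∑ i : Fin d, (if zp x i ∈ s then nB (flipCfg ξ z x) * nB (flipCfg ξ z (zp x i)) else 0)) -
          (∑ i : Fin d, (if zp x i ∈ s then nB (ξ x) * nB (ξ (zp x i)) else 0)) =
        ∑ i : Fin d, ((if x = z then (if zp z i ∈ s then ε * nB (ξ (zp z i)) else 0) else 0) +
          (if x = zm z i then ε * nB (ξ x) else 0)) := by
      intro x hx
      rw [← Finset.sum_sub_distrib]
      exact Finset.sum_congr rfl fun i _ => hpoint x hx i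
    rw [Finset.sum_congr rfl hstep1, Finset.sum_comm]
    have hstep2 : ∀ i : Fin d,
        (∑ x ∈ s, ((if x = z then (if zp z i ∈ s then ε * nB (ξ (zp z i)) else 0) else 0) +
          (if x = zm z i then ε * nB (ξ x) else 0))) =
        ε * ((if zp z i ∈ s then nB (ξ (zp z i)) else 0) +
          (if zm z i ∈ s then nB (ξ (zm z i)) else 0)) := by
      intro i
      rw [Finset.sum_add_distrib,
        Finset.sum_ite_eq' s z (fun _ => (if zp z i ∈ s then ε * nB (ξ (zp z i)) else 0)),
        if_pos hz,
        Finset.sum_ite_eq' s (zm z i) (fun x => ε * nB (ξ x))]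
      have e1 : ∀ (c : Prop) [Decidable c] (a : ℝ), (if c then ε * a else 0) = ε * (if c then a else 0) := by
        intro c _ a; split <;> simp
      rw [e1, e1, mul_add]
    rw [Finset.sum_congr rfl fun i _ => hstep2 i, ← Finset.mul_sum,
      sum_latNbrs z (fun y => if y ∈ s then nB (ξ y) else 0)]
  show (Ffun s (flipCfg ξ z)) - Ffun s ξ = _
  unfold Ffun
  linear_combination hA - hB

end TestFunction


section DirichletBound

/-- The bounding function for the Dirichlet integrand at `z`. -/
def Gbd (s : Finset (Fin d → ℤ)) (z : Fin d → ℤ) : ((Fin d → ℤ) → Bool) → ℝ := fun ξ =>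
  (∑ y ∈ latNbrs z, (if y ∈ s then nB (ξ y) else 0)) *
    ((∑ y ∈ latNbrs z, (if y ∈ s then nB (ξ y) else 0)) - 1) +
    (2 * (d : ℝ)) ^ 2 * (1 - ∏ y ∈ latNbrs z, (1 - (if y ∈ s then 0 else nB (ξ y))))

lemma cInd_flip_bound {s : Finset (Fin d → ℤ)} {z : Fin d → ℤ} (hz : z ∈ s)
    (hd1 : 1 ≤ (d : ℝ)) (ξ : (Fin d → ℤ) → Bool) :
    cInd ξ z * (Ffun s (flipCfg ξ z) - Ffun s ξ) ^ 2 ≤ Gbd s z ξ := by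
  rw [Ffun_flip hz ξ]
  unfold Gbd
  set S := ∑ y ∈ latNbrs z, (if y ∈ s then nB (ξ y) else 0) with hSdef
  have hε2 : (1 - 2 * nB (ξ z)) ^ 2 = 1 := by
    cases h : ξ z <;> simp [nB] <;> ring
  rw [mul_pow, hε2, one_mul]
  have hS0 : 0 ≤ S := by
    refine Finset.sum_nonneg fun y _ => ?_
    split
    · exact nB_nonneg _
    · exact le_refl 0
  have hc0 : 0 ≤ cInd ξ z := by unfold cInd; split <;> norm_num
  have hc1 : cInd ξ z ≤ 1 := by unfold cInd; split <;> norm_num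
  by_cases hout : ∃ y ∈ latNbrs z, y ∉ s ∧ ξ y = false
  · obtain ⟨y, hy, hys, hyf⟩ := hout
    have hP : (∏ y ∈ latNbrs z, (1 - (if y ∈ s then 0 else nB (ξ y)))) = 0 := by
      refine Finset.prod_eq_zero hy ?_
      rw [if_neg hys, hyf]
      simp [nB]
    rw [hP]
    have h1 : cInd ξ z * (1 - S) ^ 2 ≤ (1 - S) ^ 2 := by
      nlinarith [sq_nonneg (1 - S)]
    have h2 : (1 - S) ^ 2 ≤ S * (S - 1) + (2 * (d : ℝ)) ^ 2 * (1 - 0) := by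
      nlinarith [hd1, hS0]
    linarith
  · push_neg at hout
    have hP : (∏ y ∈ latNbrs z, (1 - (if y ∈ s then 0 else nB (ξ y)))) = 1 := by
      refine Finset.prod_eq_one fun y hy => ?_
      by_cases hys : y ∈ s
      · rw [if_pos hys]; ring
      · have := hout y hy hys
        have hyt : ξ y = true := by
          cases h : ξ y
          · exact absurd h this
          · rfl
        rw [if_neg hys, hyt]
        simp [nB]
    rw [hP]
    by_cases hvac : ∃ y ∈ latNbrs z, ξ y = false
    · have hc : cInd ξ z = 1 := by unfold cInd; rw [if_pos hvac]
      obtain ⟨y, hy, hyf⟩ := hvac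
      have hyins : y ∈ s := by
        by_contra hys
        exact (hout y hy hys) hyf
      have hS1 : 1 ≤ S := by
        have hnn : ∀ a ∈ latNbrs z, (0:ℝ) ≤ (if a ∈ s then nB (ξ a) else 0) := by
          intro a _; split
          · exact nB_nonneg _
          · exact le_refl 0
        have hle := Finset.single_le_sum hnn hy
        rw [if_pos hyins, hyf] at hle
        rw [hSdef]
        calc (1:ℝ) = nB false := by simp [nB]
          _ ≤ _ := hle
      rw [hc, one_mul]
      nlinarith [hS1]
    · have hc : cInd ξ z = 0 := by unfold cInd; rw [if_neg hvac]
      have hS00 : S = 0 := by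
        refine Finset.sum_eq_zero fun y hy => ?_
        by_cases hys : y ∈ s
        · rw [if_pos hys]
          have hyt : ξ y = true := by
            cases h : ξ y
            · exact absurd ⟨y, hy, h⟩ hvac
            · rfl
          rw [hyt]; simp [nB]
        · rw [if_neg hys]
      rw [hc, hS00, zero_mul]
      ring_nf
      norm_num

lemma Eloc_S_sq_sub (q : ℝ) {u : Finset (Fin d → ℤ)} {N : Finset (Fin d → ℤ)}
    (hN : N ⊆ u) :
    Eloc q u (fun ξ => (∑ y ∈ N, nB (ξ y)) * (∑ y ∈ N, nB (ξ y)) - ∑ y ∈ N, nB (ξ y)) =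
      ((N.card : ℝ) ^ 2 - N.card) * q ^ 2 := by
  have hS : Eloc q u (fun ξ => ∑ y ∈ N, nB (ξ y)) = N.card * q := by
    rw [Eloc_fsum q u N (fun y ξ => nB (ξ y))]
    rw [Finset.sum_congr rfl fun y hy => Eloc_nB q (hN hy)]
    rw [Finset.sum_const, nsmul_eq_mul]
  have hSS : Eloc q u (fun ξ => (∑ y ∈ N, nB (ξ y)) * (∑ y ∈ N, nB (ξ y))) =
      (N.card : ℝ) * ((N.card : ℝ) * q ^ 2 + (q - q ^ 2)) := by
    have hexp : (fun ξ : (Fin d → ℤ) → Bool =>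
        (∑ y ∈ N, nB (ξ y)) * (∑ y ∈ N, nB (ξ y))) =
        fun ξ => ∑ y ∈ N, ∑ y' ∈ N, nB (ξ y) * nB (ξ y') := by
      funext ξ; exact Finset.sum_mul_sum N N _ _
    rw [hexp, Eloc_fsum q u N (fun y ξ => ∑ y' ∈ N, nB (ξ y) * nB (ξ y'))]
    have hinner : ∀ y ∈ N, Eloc q u (fun ξ => ∑ y' ∈ N, nB (ξ y) * nB (ξ y')) =
        (N.card : ℝ) * q ^ 2 + (q - q ^ 2) := by
      intro y hy
      rw [Eloc_fsum q u N (fun y' ξ => nB (ξ y) * nB (ξ y'))]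
      rw [Finset.sum_congr rfl fun y' hy' => Eloc_nB_nB q (hN hy) (hN hy')]
      rw [Finset.sum_congr rfl fun y' _ => (show (if y = y' then q else q ^ 2) =
        q ^ 2 + (if y = y' then q - q ^ 2 else 0) by split <;> ring)]
      rw [Finset.sum_add_distrib, Finset.sum_const, nsmul_eq_mul,
        Finset.sum_ite_eq N y (fun _ => q - q ^ 2), if_pos hy]
    rw [Finset.sum_congr rfl hinner, Finset.sum_const, nsmul_eq_mul]
  rw [Eloc_sub, hSS, hS]
  ring

lemma Dterm_bound {q : ℝ} (h0 : 0 ≤ q) (h1 : q ≤ 1) {s : Finset (Fin d → ℤ)}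
    {z : Fin d → ℤ} (hz : z ∈ s) (hd1 : 1 ≤ (d : ℝ)) :
    Eloc q (s ∪ insert z (latNbrs z))
        (fun ξ => cInd ξ z * (Ffun s (flipCfg ξ z) - Ffun s ξ) ^ 2) ≤
      (2 * (d : ℝ)) ^ 2 * q ^ 2 +
        (2 * (d : ℝ)) ^ 2 * (((latNbrs z).filter (fun y => ¬ y ∈ s)).card : ℝ) * q := by
  set u := s ∪ insert z (latNbrs z) with hu
  have hNu : latNbrs z ⊆ u := fun y hy =>
    Finset.mem_union_right _ (Finset.mem_insert_of_mem hy)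
  refine le_trans (Eloc_mono h0 h1 (fun ξ => cInd_flip_bound hz hd1 ξ)) ?_
  -- decompose Gbd
  have hsplit : Eloc q u (Gbd s z) =
      Eloc q u (fun ξ => (∑ y ∈ latNbrs z, (if y ∈ s then nB (ξ y) else 0)) *
        ((∑ y ∈ latNbrs z, (if y ∈ s then nB (ξ y) else 0)) - 1)) +
      (2 * (d : ℝ)) ^ 2 *
        Eloc q u (fun ξ => 1 - ∏ y ∈ latNbrs z, (1 - (if y ∈ s then 0 else nB (ξ y)))) := by
    rw [show Gbd s z = fun ξ =>
        ((∑ y ∈ latNbrs z, (if y ∈ s then nB (ξ y) else 0)) *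
          ((∑ y ∈ latNbrs z, (if y ∈ s then nB (ξ y) else 0)) - 1)) +
        ((2 * (d : ℝ)) ^ 2 *
          (1 - ∏ y ∈ latNbrs z, (1 - (if y ∈ s then 0 else nB (ξ y))))) from rfl]
    rw [Eloc_add, Eloc_const_mul]
  rw [hsplit]
  -- set Ns and Nout
  set Ns := (latNbrs z).filter (fun y => y ∈ s) with hNs
  set Nout := (latNbrs z).filter (fun y => ¬ y ∈ s) with hNout
  have hNsu : Ns ⊆ u := le_trans (Finset.filter_subset _ _) hNu
  have hNoutu : Nout ⊆ u := le_trans (Finset.filter_subset _ _) hNu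
  -- first part
  have hpart1 : Eloc q u (fun ξ => (∑ y ∈ latNbrs z, (if y ∈ s then nB (ξ y) else 0)) *
      ((∑ y ∈ latNbrs z, (if y ∈ s then nB (ξ y) else 0)) - 1)) ≤
      (2 * (d : ℝ)) ^ 2 * q ^ 2 := by
    have hrw : (fun ξ : (Fin d → ℤ) → Bool =>
        (∑ y ∈ latNbrs z, (if y ∈ s then nB (ξ y) else 0)) *
          ((∑ y ∈ latNbrs z, (if y ∈ s then nB (ξ y) else 0)) - 1)) =
        fun ξ => (∑ y ∈ Ns, nB (ξ y)) * (∑ y ∈ Ns, nB (ξ y)) - ∑ y ∈ Ns, nB (ξ y) := by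
      funext ξ
      rw [hNs, Finset.sum_filter]
      ring
    rw [hrw, Eloc_S_sq_sub q hNsu]
    have hk : (Ns.card : ℝ) ≤ 2 * d := by
      have h1 : Ns.card ≤ (latNbrs z).card := Finset.card_filter_le _ _
      have h2 := card_latNbrs_le z
      have : Ns.card ≤ 2 * d := le_trans h1 h2
      exact_mod_cast this
    have hk0 : (0:ℝ) ≤ (Ns.card : ℝ) := Nat.cast_nonneg _
    have hkk : ((Ns.card : ℝ) ^ 2 - Ns.card) ≤ (2 * (d:ℝ)) ^ 2 := by nlinarith
    exact mul_le_mul_of_nonneg_right hkk (sq_nonneg q)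
  -- second part
  have hpart2 : Eloc q u (fun ξ => 1 - ∏ y ∈ latNbrs z,
      (1 - (if y ∈ s then 0 else nB (ξ y)))) ≤ (Nout.card : ℝ) * q := by
    have hrw : (fun ξ : (Fin d → ℤ) → Bool =>
        1 - ∏ y ∈ latNbrs z, (1 - (if y ∈ s then 0 else nB (ξ y)))) =
        fun ξ => 1 - ∏ y ∈ Nout, (1 - nB (ξ y)) := by
      funext ξ
      rw [hNout, Finset.prod_filter]
      congr 1
      refine Finset.prod_congr rfl fun y _ => ?_
      by_cases hys : y ∈ s
      · rw [if_pos hys, if_neg (by simpa using hys)]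
        ring
      · rw [if_neg hys, if_pos hys]
    rw [hrw, Eloc_sub, Eloc_const, Eloc_omonomial q hNoutu]
    have hber := one_add_mul_le_pow (show (-2:ℝ) ≤ -q by linarith) Nout.card
    have : (1:ℝ) + (Nout.card : ℝ) * (-q) ≤ (1 - q) ^ Nout.card := by
      calc (1:ℝ) + (Nout.card : ℝ) * (-q) ≤ (1 + (-q)) ^ Nout.card := hber
        _ = (1 - q) ^ Nout.card := by ring_nf
    linarith
  have hd0 : (0:ℝ) ≤ (2 * (d : ℝ)) ^ 2 := sq_nonneg _
  calc Eloc q u (fun ξ => (∑ y ∈ latNbrs z, (if y ∈ s then nB (ξ y) else 0)) *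
        ((∑ y ∈ latNbrs z, (if y ∈ s then nB (ξ y) else 0)) - 1)) +
      (2 * (d : ℝ)) ^ 2 *
        Eloc q u (fun ξ => 1 - ∏ y ∈ latNbrs z, (1 - (if y ∈ s then 0 else nB (ξ y))))
      ≤ (2 * (d : ℝ)) ^ 2 * q ^ 2 + (2 * (d : ℝ)) ^ 2 * ((Nout.card : ℝ) * q) := by
        have := mul_le_mul_of_nonneg_left hpart2 hd0
        linarith
    _ = (2 * (d : ℝ)) ^ 2 * q ^ 2 + (2 * (d : ℝ)) ^ 2 * (Nout.card : ℝ) * q := by ring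

end DirichletBound


section Variance

/-- The linear comparison function. -/
def Hfun (q : ℝ) (s : Finset (Fin d → ℤ)) : ((Fin d → ℤ) → Bool) → ℝ := fun ξ =>
  ∑ x ∈ s, (nB (ξ x) - q)

lemma Eloc_H (q : ℝ) (s : Finset (Fin d → ℤ)) : Eloc q s (Hfun q s) = 0 := by
  unfold Hfun
  rw [Eloc_fsum q s s (fun x ξ => nB (ξ x) - q)]
  have : ∀ x ∈ s, Eloc q s (fun ξ => nB (ξ x) - q) = 0 := by
    intro x hx
    rw [Eloc_sub q s (fun ξ => nB (ξ x)) (fun _ => q), Eloc_nB q hx, Eloc_const, sub_self]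
  rw [Finset.sum_congr rfl this, Finset.sum_const_zero]

lemma Eloc_nB_centered (q : ℝ) {s : Finset (Fin d → ℤ)} {x v : Fin d → ℤ}
    (hx : x ∈ s) (hv : v ∈ s) :
    Eloc q s (fun ξ => nB (ξ x) * (nB (ξ v) - q)) = if x = v then q * (1 - q) else 0 := by
  rw [show (fun ξ : (Fin d → ℤ) → Bool => nB (ξ x) * (nB (ξ v) - q)) =
    fun ξ => nB (ξ x) * nB (ξ v) - q * nB (ξ x) from by funext ξ; ring]
  rw [Eloc_sub, Eloc_const_mul, Eloc_nB q hx, Eloc_nB_nB q hx hv]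
  split <;> ring

lemma Eloc_centered_pair (q : ℝ) {s : Finset (Fin d → ℤ)} {x v : Fin d → ℤ}
    (hx : x ∈ s) (hv : v ∈ s) :
    Eloc q s (fun ξ => (nB (ξ x) - q) * (nB (ξ v) - q)) =
      if x = v then q * (1 - q) else 0 := by
  rw [show (fun ξ : (Fin d → ℤ) → Bool => (nB (ξ x) - q) * (nB (ξ v) - q)) =
    fun ξ => nB (ξ x) * (nB (ξ v) - q) - q * (nB (ξ v) - q) from by funext ξ; ring]
  rw [Eloc_sub, Eloc_const_mul, Eloc_nB_centered q hx hv,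
    Eloc_sub q s (fun ξ => nB (ξ v)) (fun _ => q), Eloc_nB q hv, Eloc_const, sub_self,
    mul_zero, sub_zero]

lemma Eloc_HH (q : ℝ) (s : Finset (Fin d → ℤ)) :
    Eloc q s (fun ξ => Hfun q s ξ * Hfun q s ξ) = (s.card : ℝ) * (q * (1 - q)) := by
  rw [show (fun ξ : (Fin d → ℤ) → Bool => Hfun q s ξ * Hfun q s ξ) =
    fun ξ => ∑ x ∈ s, ∑ v ∈ s, (nB (ξ x) - q) * (nB (ξ v) - q) from by
      funext ξ; exact Finset.sum_mul_sum s s _ _]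
  rw [Eloc_fsum q s s (fun x ξ => ∑ v ∈ s, (nB (ξ x) - q) * (nB (ξ v) - q))]
  have hinner : ∀ x ∈ s, Eloc q s (fun ξ => ∑ v ∈ s, (nB (ξ x) - q) * (nB (ξ v) - q)) =
      q * (1 - q) := by
    intro x hx
    rw [Eloc_fsum q s s (fun v ξ => (nB (ξ x) - q) * (nB (ξ v) - q))]
    rw [Finset.sum_congr rfl fun v hv => Eloc_centered_pair q hx hv]
    rw [Finset.sum_ite_eq s x (fun _ => q * (1 - q)), if_pos hx]
  rw [Finset.sum_congr rfl hinner, Finset.sum_const, nsmul_eq_mul]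

lemma Eloc_nn_H (q : ℝ) {s : Finset (Fin d → ℤ)} {x y : Fin d → ℤ}
    (hxy : x ≠ y) (hx : x ∈ s) (hy : y ∈ s) :
    Eloc q s (fun ξ => nB (ξ x) * nB (ξ y) * Hfun q s ξ) = 2 * (q ^ 2 * (1 - q)) := by
  rw [show (fun ξ : (Fin d → ℤ) → Bool => nB (ξ x) * nB (ξ y) * Hfun q s ξ) =
    fun ξ => ∑ v ∈ s, (nB (ξ x) * nB (ξ y) * nB (ξ v) - q * (nB (ξ x) * nB (ξ y))) from by
      funext ξ
      unfold Hfun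
      rw [Finset.mul_sum]
      exact Finset.sum_congr rfl fun v _ => by ring]
  rw [Eloc_fsum q s s (fun v ξ => nB (ξ x) * nB (ξ y) * nB (ξ v) -
    q * (nB (ξ x) * nB (ξ y)))]
  have hv : ∀ v ∈ s, Eloc q s (fun ξ => nB (ξ x) * nB (ξ y) * nB (ξ v) -
      q * (nB (ξ x) * nB (ξ y))) =
      (if v = x then q ^ 2 - q ^ 3 else 0) + (if v = y then q ^ 2 - q ^ 3 else 0) := by
    intro v hvs
    rw [Eloc_sub, Eloc_const_mul, Eloc_nB3 q hxy hx hy hvs, Eloc_nB_nB q hx hy,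
      if_neg hxy]
    by_cases h1 : v = x
    · rw [if_pos (Or.inl h1), if_pos h1,
        if_neg (show ¬ v = y from fun h2 => hxy (h1.symm.trans h2))]
      ring
    · by_cases h2 : v = y
      · rw [if_pos (Or.inr h2), if_neg h1, if_pos h2]
        ring
      · rw [if_neg (by tauto), if_neg h1, if_neg h2]
        ring
  rw [Finset.sum_congr rfl hv, Finset.sum_add_distrib,
    Finset.sum_ite_eq' s x (fun _ => q ^ 2 - q ^ 3), if_pos hx,
    Finset.sum_ite_eq' s y (fun _ => q ^ 2 - q ^ 3), if_pos hy]
  ring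

lemma Eloc_AH (q : ℝ) (s : Finset (Fin d → ℤ)) :
    Eloc q s (fun ξ => (∑ x ∈ s, nB (ξ x)) * Hfun q s ξ) =
      (s.card : ℝ) * (q * (1 - q)) := by
  rw [show (fun ξ : (Fin d → ℤ) → Bool => (∑ x ∈ s, nB (ξ x)) * Hfun q s ξ) =
    fun ξ => ∑ x ∈ s, nB (ξ x) * Hfun q s ξ from by
      funext ξ; exact Finset.sum_mul s _ _]
  rw [Eloc_fsum q s s (fun x ξ => nB (ξ x) * Hfun q s ξ)]
  have hx1 : ∀ x ∈ s, Eloc q s (fun ξ => nB (ξ x) * Hfun q s ξ) = q * (1 - q) := by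
    intro x hx
    rw [show (fun ξ : (Fin d → ℤ) → Bool => nB (ξ x) * Hfun q s ξ) =
      fun ξ => ∑ v ∈ s, nB (ξ x) * (nB (ξ v) - q) from by
        funext ξ; unfold Hfun; exact Finset.mul_sum s _ _]
    rw [Eloc_fsum q s s (fun v ξ => nB (ξ x) * (nB (ξ v) - q))]
    rw [Finset.sum_congr rfl fun v hv => Eloc_nB_centered q hx hv]
    rw [Finset.sum_ite_eq s x (fun _ => q * (1 - q)), if_pos hx]
  rw [Finset.sum_congr rfl hx1, Finset.sum_const, nsmul_eq_mul]

lemma Eloc_BH_le {q : ℝ} (h0 : 0 ≤ q) (h1 : q ≤ 1) (s : Finset (Fin d → ℤ)) :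
    Eloc q s (fun ξ => (∑ x ∈ s, ∑ i : Fin d,
        (if zp x i ∈ s then nB (ξ x) * nB (ξ (zp x i)) else 0)) * Hfun q s ξ) ≤
      (s.card : ℝ) * (d : ℝ) * (2 * (q ^ 2 * (1 - q))) := by
  rw [show (fun ξ : (Fin d → ℤ) → Bool => (∑ x ∈ s, ∑ i : Fin d,
      (if zp x i ∈ s then nB (ξ x) * nB (ξ (zp x i)) else 0)) * Hfun q s ξ) =
    fun ξ => ∑ x ∈ s, ∑ i : Fin d,
      ((if zp x i ∈ s then nB (ξ x) * nB (ξ (zp x i)) else 0) * Hfun q s ξ) from by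
      funext ξ
      rw [Finset.sum_mul]
      exact Finset.sum_congr rfl fun x _ => Finset.sum_mul _ _ _]
  rw [Eloc_fsum q s s _]
  have hterm : ∀ x ∈ s, ∀ i : Fin d,
      Eloc q s (fun ξ => (if zp x i ∈ s then nB (ξ x) * nB (ξ (zp x i)) else 0) *
        Hfun q s ξ) ≤ 2 * (q ^ 2 * (1 - q)) := by
    intro x hx i
    by_cases hzp : zp x i ∈ s
    · rw [show (fun ξ : (Fin d → ℤ) → Bool =>
        (if zp x i ∈ s then nB (ξ x) * nB (ξ (zp x i)) else 0) * Hfun q s ξ) =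
        fun ξ => nB (ξ x) * nB (ξ (zp x i)) * Hfun q s ξ from by
          funext ξ; rw [if_pos hzp]]
      rw [Eloc_nn_H q (Ne.symm (zp_ne_self x i)) hx hzp]
    · rw [show (fun ξ : (Fin d → ℤ) → Bool =>
        (if zp x i ∈ s then nB (ξ x) * nB (ξ (zp x i)) else 0) * Hfun q s ξ) =
        fun _ => 0 from by
          funext ξ; rw [if_neg hzp, zero_mul]]
      rw [Eloc_const]
      nlinarith
  calc ∑ x ∈ s, Eloc q s (fun ξ => ∑ i : Fin d,
        ((if zp x i ∈ s then nB (ξ x) * nB (ξ (zp x i)) else 0) * Hfun q s ξ))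
      = ∑ x ∈ s, ∑ i : Fin d, Eloc q s (fun ξ =>
          (if zp x i ∈ s then nB (ξ x) * nB (ξ (zp x i)) else 0) * Hfun q s ξ) := by
        exact Finset.sum_congr rfl fun x _ => Eloc_fsum q s Finset.univ _
    _ ≤ ∑ x ∈ s, ∑ _i : Fin d, 2 * (q ^ 2 * (1 - q)) := by
        refine Finset.sum_le_sum fun x hx => Finset.sum_le_sum fun i _ => hterm x hx i
    _ = (s.card : ℝ) * (d : ℝ) * (2 * (q ^ 2 * (1 - q))) := by
        rw [Finset.sum_const, Finset.sum_const, nsmul_eq_mul, nsmul_eq_mul]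
        simp [Finset.card_univ]
        ring

lemma Eloc_FH_ge {q : ℝ} (h0 : 0 ≤ q) (h1 : q ≤ 1) (s : Finset (Fin d → ℤ)) :
    Eloc q s (fun ξ => Ffun s ξ * Hfun q s ξ) ≥
      (s.card : ℝ) * (q * (1 - q)) * (1 - 2 * (d : ℝ) * q) := by
  rw [show (fun ξ : (Fin d → ℤ) → Bool => Ffun s ξ * Hfun q s ξ) =
    fun ξ => (∑ x ∈ s, nB (ξ x)) * Hfun q s ξ - (∑ x ∈ s, ∑ i : Fin d,
      (if zp x i ∈ s then nB (ξ x) * nB (ξ (zp x i)) else 0)) * Hfun q s ξ from by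
      funext ξ; unfold Ffun; ring]
  rw [Eloc_sub, Eloc_AH q s]
  have := Eloc_BH_le h0 h1 s
  have hcard : (0:ℝ) ≤ (s.card : ℝ) := Nat.cast_nonneg _
  nlinarith [this]

lemma Varloc_ge {q : ℝ} (h0 : 0 < q) (h1 : q ≤ 1) (hd1 : 1 ≤ (d : ℝ))
    (hdq : 2 * (d : ℝ) * q ≤ 1 / 2) {s : Finset (Fin d → ℤ)} (hs : 1 ≤ s.card) :
    (s.card : ℝ) * (q * (1 - q)) / 4 ≤ Varloc q s (Ffun s) := by
  have hq1 : q ≤ 1 / 4 := by nlinarith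
  have hvv : 0 < q * (1 - q) := by nlinarith
  have hV : (1:ℝ) ≤ (s.card : ℝ) := by exact_mod_cast hs
  have hVvv : 0 < (s.card : ℝ) * (q * (1 - q)) := by nlinarith
  set E0 := Eloc q s (Ffun s) with hE0
  set Cov := Eloc q s (fun ξ => (Ffun s ξ - E0) * Hfun q s ξ) with hCov
  have hCoveq : Cov = Eloc q s (fun ξ => Ffun s ξ * Hfun q s ξ) := by
    rw [hCov, show (fun ξ : (Fin d → ℤ) → Bool => (Ffun s ξ - E0) * Hfun q s ξ) =
      fun ξ => Ffun s ξ * Hfun q s ξ - E0 * Hfun q s ξ from by funext ξ; ring]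
    rw [Eloc_sub, Eloc_const_mul, Eloc_H, mul_zero, sub_zero]
  have hCovge : (s.card : ℝ) * (q * (1 - q)) / 2 ≤ Cov := by
    rw [hCoveq]
    have := Eloc_FH_ge h0.le h1 s
    nlinarith [this, hVvv]
  have hCS : Cov ^ 2 ≤ Varloc q s (Ffun s) * ((s.card : ℝ) * (q * (1 - q))) := by
    have hcs := Eloc_cauchy h0.le h1 s (fun ξ => Ffun s ξ - E0) (Hfun q s)
    have hH2 : Eloc q s (fun ξ => Hfun q s ξ ^ 2) = (s.card : ℝ) * (q * (1 - q)) := by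
      rw [show (fun ξ : (Fin d → ℤ) → Bool => Hfun q s ξ ^ 2) =
        fun ξ => Hfun q s ξ * Hfun q s ξ from by funext ξ; ring]
      exact Eloc_HH q s
    have hVarEq : Eloc q s (fun ξ => (Ffun s ξ - E0) ^ 2) = Varloc q s (Ffun s) := rfl
    rw [hH2, hVarEq] at hcs
    exact hcs
  have hsq : ((s.card : ℝ) * (q * (1 - q)) / 2) ^ 2 ≤ Cov ^ 2 := by
    have hc0 : 0 ≤ (s.card : ℝ) * (q * (1 - q)) / 2 := by positivity
    exact pow_le_pow_left₀ hc0 hCovge 2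
  nlinarith [le_trans hsq hCS, hVvv]

end Variance


section Box

/-- The box `[0, L)^d`. -/
def box (d L : ℕ) : Finset (Fin d → ℤ) :=
  Fintype.piFinset fun _ : Fin d => Finset.Ico (0 : ℤ) (L : ℤ)

lemma mem_box {L : ℕ} {x : Fin d → ℤ} :
    x ∈ box d L ↔ ∀ i, 0 ≤ x i ∧ x i < (L : ℤ) := by
  simp [box, Fintype.mem_piFinset, Finset.mem_Ico]

lemma card_box (L : ℕ) : (box d L).card = L ^ d := by
  rw [box, Fintype.card_piFinset]
  simp [Int.card_Ico]

lemma card_box_slice (L : ℕ) (i : Fin d) (c : ℤ) (hc : c ∈ Finset.Ico (0 : ℤ) (L : ℤ)) :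
    ((box d L).filter (fun z => z i = c)).card = L ^ (d - 1) := by
  have hset : (box d L).filter (fun z => z i = c) =
      Fintype.piFinset (Function.update (fun _ : Fin d => Finset.Ico (0 : ℤ) (L : ℤ)) i {c}) := by
    ext z
    simp only [Finset.mem_filter, Fintype.mem_piFinset, Function.update_apply, box]
    constructor
    · rintro ⟨hall, hzi⟩ j
      by_cases hji : j = i
      · rw [if_pos hji, hji, Finset.mem_singleton]
        exact hzi
      · rw [if_neg hji]
        exact hall j
    · intro hall
      constructor
      · intro j
        by_cases hji : j = i
        · have hj := hall j
          rw [if_pos hji, Finset.mem_singleton] at hj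
          subst hji
          rw [hj]
          exact hc
        · have hj := hall j
          rw [if_neg hji] at hj
          exact hj
      · have hi := hall i
        rw [if_pos rfl, Finset.mem_singleton] at hi
        exact hi
  rw [hset, Fintype.card_piFinset,
    ← Finset.mul_prod_erase Finset.univ _ (Finset.mem_univ i)]
  rw [show (Function.update (fun _ : Fin d => Finset.Ico (0 : ℤ) (L : ℤ)) i {c}) i = {c} from
    Function.update_self i _ _]
  have h1 : ∀ j ∈ Finset.univ.erase i,
      (Function.update (fun _ : Fin d => Finset.Ico (0 : ℤ) (L : ℤ)) i {c} j).card = L := by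
    intro j hj
    have hji : j ≠ i := (Finset.mem_erase.mp hj).1
    rw [Function.update_of_ne hji]
    simp [Int.card_Ico]
  rw [Finset.prod_congr rfl h1, Finset.prod_const,
    Finset.card_erase_of_mem (Finset.mem_univ i), Finset.card_singleton]
  simp [Fintype.card_fin]

lemma sum_boundary_le (L : ℕ) (hL : 1 ≤ L) :
    ∑ z ∈ box d L, ((latNbrs z).filter (fun y => ¬ y ∈ box d L)).card ≤
      2 * d * L ^ (d - 1) := by
  have hpt : ∀ z ∈ box d L, ((latNbrs z).filter (fun y => ¬ y ∈ box d L)).card ≤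
      ∑ i : Fin d, ((if z i = (L : ℤ) - 1 then 1 else 0) + (if z i = 0 then 1 else 0)) := by
    intro z hz
    have hsub : (latNbrs z).filter (fun y => ¬ y ∈ box d L) ⊆
        Finset.univ.biUnion (fun i : Fin d =>
          ({zp z i, zm z i} : Finset (Fin d → ℤ)).filter (fun y => ¬ y ∈ box d L)) := by
      intro y hy
      rw [Finset.mem_filter] at hy
      obtain ⟨hyN, hyout⟩ := hy
      rw [latNbrs_eq, Finset.mem_biUnion] at hyN
      obtain ⟨i, _, hpair⟩ := hyN
      rw [Finset.mem_biUnion]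
      exact ⟨i, Finset.mem_univ i, Finset.mem_filter.mpr ⟨hpair, hyout⟩⟩
    refine le_trans (le_trans (Finset.card_le_card hsub) Finset.card_biUnion_le) ?_
    refine Finset.sum_le_sum fun i _ => ?_
    have hcard : (({zp z i, zm z i} : Finset (Fin d → ℤ)).filter
        (fun y => ¬ y ∈ box d L)).card ≤
        (if ¬ zp z i ∈ box d L then 1 else 0) + (if ¬ zm z i ∈ box d L then 1 else 0) := by
      rw [Finset.filter_insert, Finset.filter_singleton]
      split_ifs
      all_goals first
        | (simp; done)
        | exact le_trans (Finset.card_insert_le _ _) (by simp)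
    refine le_trans hcard ?_
    have hb := mem_box.mp hz
    have hzpc : ¬ zp z i ∈ box d L → z i = (L : ℤ) - 1 := by
      intro h
      by_contra hne
      apply h
      rw [mem_box]
      intro j
      rw [zp_apply]
      by_cases hji : j = i
      · rw [if_pos hji]
        have h1 := (hb i).1
        have h2 := (hb i).2
        omega
      · rw [if_neg hji]
        exact hb j
    have hzmc : ¬ zm z i ∈ box d L → z i = 0 := by
      intro h
      by_contra hne
      apply h
      rw [mem_box]
      intro j
      rw [zm_apply]
      by_cases hji : j = i
      · rw [if_pos hji]
        have h1 := (hb i).1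
        have h2 := (hb i).2
        omega
      · rw [if_neg hji]
        exact hb j
    have e1 : (if ¬ zp z i ∈ box d L then 1 else 0) ≤
        (if z i = (L : ℤ) - 1 then 1 else 0) := by
      by_cases h1 : zp z i ∈ box d L
      · rw [if_neg (not_not_intro h1)]
        exact Nat.zero_le _
      · rw [if_pos h1, if_pos (hzpc h1)]
    have e2 : (if ¬ zm z i ∈ box d L then 1 else 0) ≤ (if z i = 0 then 1 else 0) := by
      by_cases h1 : zm z i ∈ box d L
      · rw [if_neg (not_not_intro h1)]
        exact Nat.zero_le _
      · rw [if_pos h1, if_pos (hzmc h1)]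
    omega
  refine le_trans (Finset.sum_le_sum hpt) ?_
  rw [Finset.sum_comm]
  have hcount : ∀ i : Fin d, (∑ z ∈ box d L,
      ((if z i = (L : ℤ) - 1 then 1 else 0) + (if z i = 0 then 1 else 0))) =
      L ^ (d - 1) + L ^ (d - 1) := by
    intro i
    rw [Finset.sum_add_distrib]
    have c1 : (∑ z ∈ box d L, (if z i = (L : ℤ) - 1 then 1 else 0)) = L ^ (d - 1) := by
      have h := card_box_slice L i ((L : ℤ) - 1) (by rw [Finset.mem_Ico]; omega)
      rw [Finset.card_filter] at h
      exact h
    have c2 : (∑ z ∈ box d L, (if z i = 0 then 1 else 0)) = L ^ (d - 1) := by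
      have hmem0 : (0 : ℤ) ∈ Finset.Ico (0 : ℤ) (L : ℤ) :=
        Finset.left_mem_Ico.mpr (Int.natCast_pos.mpr hL)
      have h := card_box_slice L i 0 hmem0
      rw [Finset.card_filter] at h
      exact h
    rw [c1, c2]
  refine le_of_eq ?_
  calc ∑ i : Fin d, ∑ z ∈ box d L,
        ((if z i = (L : ℤ) - 1 then 1 else 0) + (if z i = 0 then 1 else 0))
      = ∑ _i : Fin d, (L ^ (d - 1) + L ^ (d - 1)) :=
        Finset.sum_congr rfl fun i _ => hcount i
    _ = d * (L ^ (d - 1) + L ^ (d - 1)) := by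
        rw [Finset.sum_const, Finset.card_univ, Fintype.card_fin, smul_eq_mul]
    _ = 2 * d * L ^ (d - 1) := by ring

end Box

section Assembly

lemma Ffun_localOn (s : Finset (Fin d → ℤ)) : localOn s (Ffun s) := by
  intro η η' hagree
  unfold Ffun
  congr 1
  · exact Finset.sum_congr rfl fun x hx => by rw [hagree x hx]
  · refine Finset.sum_congr rfl fun x hx => Finset.sum_congr rfl fun i _ => ?_
    by_cases h : zp x i ∈ s
    · rw [if_pos h, if_pos h, hagree x hx, hagree _ h]
    · rw [if_neg h, if_neg h]

lemma Dterm_zero (q : ℝ) (s : Finset (Fin d → ℤ)) (f : ((Fin d → ℤ) → Bool) → ℝ)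
    (hf : localOn s f) {x : Fin d → ℤ} (hx : x ∉ s) :
    Eloc q (s ∪ insert x (latNbrs x))
      (fun η => cInd η x * (f (flipCfg η x) - f η) ^ 2) = 0 := by
  have hzero : (fun η : (Fin d → ℤ) → Bool => cInd η x * (f (flipCfg η x) - f η) ^ 2) =
      fun _ => (0:ℝ) := by
    funext ξ
    have hfix : f (flipCfg ξ x) = f ξ := by
      refine hf _ _ fun y hy => ?_
      exact flipCfg_apply_ne ξ fun h => hx (h ▸ hy)
    rw [hfix, sub_self]
    ring
  rw [hzero, Eloc_const]

lemma Dform_eq_sum (q : ℝ) (s : Finset (Fin d → ℤ)) (f : ((Fin d → ℤ) → Bool) → ℝ)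
    (hf : localOn s f) :
    Dform q s f = q * (1 - q) * ∑ z ∈ s,
      Eloc q (s ∪ insert z (latNbrs z))
        (fun η => cInd η z * (f (flipCfg η z) - f η) ^ 2) := by
  unfold Dform
  congr 1
  exact tsum_eq_sum fun x hx => Dterm_zero q s f hf hx

lemma Dform_nonneg {q : ℝ} (h0 : 0 ≤ q) (h1 : q ≤ 1) (s : Finset (Fin d → ℤ))
    (f : ((Fin d → ℤ) → Bool) → ℝ) : 0 ≤ Dform q s f := by
  unfold Dform
  refine mul_nonneg (mul_nonneg h0 (by linarith)) ?_
  refine tsum_nonneg fun x => ?_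
  refine Eloc_nonneg h0 h1 fun ξ => ?_
  refine mul_nonneg ?_ (sq_nonneg _)
  unfold cInd
  split <;> norm_num

lemma Varloc_nonneg {q : ℝ} (h0 : 0 ≤ q) (h1 : q ≤ 1) (s : Finset (Fin d → ℤ))
    (f : ((Fin d → ℤ) → Bool) → ℝ) : 0 ≤ Varloc q s f :=
  Eloc_nonneg h0 h1 fun ξ => sq_nonneg _

end Assembly


end FA1fAux

set_option maxHeartbeats 2000000 in
/-- in dimension `d ≥ 3`, the spectral gap of FA1f satisfies
`gap(L) ≤ C q²` for small `q`. -/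
theorem gapFA_le (d : ℕ) (hd : 3 ≤ d) :
    ∃ C > (0 : ℝ), ∃ q₀ > (0 : ℝ), ∀ q : ℝ, 0 < q → q ≤ q₀ →
      gapFA d q ≤ C * q ^ 2 := by
  classical
  have hd0 : (0:ℝ) < (d:ℝ) := by
    have h : 0 < d := by omega
    exact_mod_cast h
  have hd1 : (1:ℝ) ≤ (d:ℝ) := by
    have h : 1 ≤ d := by omega
    exact_mod_cast h
  refine ⟨16 * (d:ℝ)^2 + 32 * (d:ℝ)^3,
    by nlinarith [pow_pos hd0 2, pow_pos hd0 3],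
    1 / (4 * (d:ℝ)), div_pos one_pos (by nlinarith), ?_⟩
  intro q hq0 hqle
  have hq4d : q * (4 * (d:ℝ)) ≤ 1 := by
    rw [le_div_iff₀ (by nlinarith : (0:ℝ) < 4 * (d:ℝ))] at hqle
    exact hqle
  have hdq : 2 * (d:ℝ) * q ≤ 1/2 := by nlinarith
  have hq1 : q ≤ 1 := by nlinarith
  -- the box scale
  set L : ℕ := ⌈1 / q⌉₊ with hLdef
  have hqL : 1 ≤ q * (L:ℝ) := by
    have h := Nat.le_ceil (1 / q)
    have h2 : q * (1/q) ≤ q * (L:ℝ) := by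
      apply mul_le_mul_of_nonneg_left _ hq0.le
      exact_mod_cast h
    rw [mul_one_div, div_self (ne_of_gt hq0)] at h2
    exact h2
  have hL1 : 1 ≤ L := by
    by_contra hcon
    push_neg at hcon
    have hL0 : L = 0 := by omega
    rw [hL0] at hqL
    norm_num at hqL
  set s : Finset (Fin d → ℤ) := FA1fAux.box d L with hsdef
  have hcards : s.card = L ^ d := FA1fAux.card_box L
  have hcard1 : 1 ≤ s.card := by
    rw [hcards]
    have : 0 < L ^ d := pow_pos (by omega) d
    omega
  set f : ((Fin d → ℤ) → Bool) → ℝ := FA1fAux.Ffun s with hfdef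
  have hloc : localOn s f := FA1fAux.Ffun_localOn s
  -- variance lower bound
  have hVar : (s.card : ℝ) * (q * (1-q)) / 4 ≤ Varloc q s f :=
    FA1fAux.Varloc_ge hq0 hq1 hd1 hdq hcard1
  have hVcast : (1:ℝ) ≤ (s.card:ℝ) := by exact_mod_cast hcard1
  have hvv : 0 < q * (1-q) := by nlinarith
  have hVarpos : 0 < Varloc q s f := lt_of_lt_of_le (by nlinarith) hVar
  -- Dirichlet form upper bound
  have hDsum := FA1fAux.Dform_eq_sum q s f hloc
  have hterm : ∀ z ∈ s, Eloc q (s ∪ insert z (latNbrs z))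
      (fun η => cInd η z * (f (flipCfg η z) - f η) ^ 2) ≤
      (2*(d:ℝ))^2 * q^2 +
        (2*(d:ℝ))^2 * (((latNbrs z).filter (fun y => ¬ y ∈ s)).card : ℝ) * q :=
    fun z hz => FA1fAux.Dterm_bound hq0.le hq1 hz hd1
  have hsum1 : (∑ z ∈ s, Eloc q (s ∪ insert z (latNbrs z))
      (fun η => cInd η z * (f (flipCfg η z) - f η) ^ 2)) ≤
      (s.card : ℝ) * ((2*(d:ℝ))^2 * q^2) +
        (2*(d:ℝ))^2 * q *
          ((∑ z ∈ s, ((latNbrs z).filter (fun y => ¬ y ∈ s)).card : ℕ) : ℝ) := by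
    refine le_trans (Finset.sum_le_sum hterm) ?_
    rw [Finset.sum_add_distrib, Finset.sum_const, nsmul_eq_mul]
    have e1 : ∑ z ∈ s, (2*(d:ℝ))^2 * (((latNbrs z).filter (fun y => ¬ y ∈ s)).card : ℝ) * q
        = (2*(d:ℝ))^2 * q * ∑ z ∈ s, (((latNbrs z).filter (fun y => ¬ y ∈ s)).card : ℝ) := by
      rw [Finset.mul_sum]
      exact Finset.sum_congr rfl fun z _ => by ring
    have e2 : (∑ z ∈ s, (((latNbrs z).filter (fun y => ¬ y ∈ s)).card : ℝ))
        = ((∑ z ∈ s, ((latNbrs z).filter (fun y => ¬ y ∈ s)).card : ℕ) : ℝ) := by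
      push_cast
      rfl
    rw [e1, e2]
  have hbd : (∑ z ∈ s, ((latNbrs z).filter (fun y => ¬ y ∈ s)).card) ≤
      2 * d * L ^ (d - 1) := by
    rw [hsdef]
    exact FA1fAux.sum_boundary_le L hL1
  have hL0r : (0:ℝ) ≤ (L:ℝ) := Nat.cast_nonneg _
  have hLpow : ((L:ℝ))^(d-1) * ((L:ℝ)) = ((L:ℝ))^d := by
    rw [← pow_succ]
    congr 1
    omega
  have hsum2 : ((∑ z ∈ s, ((latNbrs z).filter (fun y => ¬ y ∈ s)).card : ℕ) : ℝ) ≤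
      2*(d:ℝ)*(q * ((L:ℝ))^d) := by
    calc ((∑ z ∈ s, ((latNbrs z).filter (fun y => ¬ y ∈ s)).card : ℕ) : ℝ)
        ≤ ((2 * d * L ^ (d - 1) : ℕ) : ℝ) := by exact_mod_cast hbd
      _ = 2*(d:ℝ)*((L:ℝ))^(d-1) := by push_cast; ring
      _ ≤ 2*(d:ℝ)*(((L:ℝ))^(d-1) * (q*(L:ℝ))) := by
          have hp : (0:ℝ) ≤ ((L:ℝ))^(d-1) := pow_nonneg hL0r _
          have h6 : ((L:ℝ))^(d-1) ≤ ((L:ℝ))^(d-1) * (q*(L:ℝ)) := by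
            nlinarith [hqL, hp]
          nlinarith [hd0, h6]
      _ = 2*(d:ℝ)*(q * ((L:ℝ))^d) := by rw [← hLpow]; ring
  have hVr : (s.card : ℝ) = ((L:ℝ))^d := by
    rw [hcards]
    push_cast
    rfl
  clear_value f s L
  have hD : Dform q s f ≤ (4*(d:ℝ)^2 + 8*(d:ℝ)^3) * q^2 * ((s.card:ℝ) * (q*(1-q))) := by
    rw [hDsum]
    have hqp : (0:ℝ) ≤ q * (1-q) := hvv.le
    have hsum3 : (∑ z ∈ s, Eloc q (s ∪ insert z (latNbrs z))
        (fun η => cInd η z * (f (flipCfg η z) - f η) ^ 2)) ≤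
        (4*(d:ℝ)^2 + 8*(d:ℝ)^3) * q^2 * (s.card:ℝ) := by
      refine le_trans hsum1 ?_
      have h4 : (2*(d:ℝ))^2 * q * (2*(d:ℝ)*(q * ((L:ℝ))^d)) =
          8*(d:ℝ)^3 * q^2 * ((L:ℝ))^d := by ring
      have h5 : (2*(d:ℝ))^2 * q *
          ((∑ z ∈ s, ((latNbrs z).filter (fun y => ¬ y ∈ s)).card : ℕ) : ℝ) ≤
          8*(d:ℝ)^3 * q^2 * ((L:ℝ))^d := by
        rw [← h4]
        exact mul_le_mul_of_nonneg_left hsum2 (mul_nonneg (sq_nonneg _) hq0.le)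
      have h6 : 8*(d:ℝ)^3*q^2*((L:ℝ))^d = 8*(d:ℝ)^3*q^2*(s.card:ℝ) := by rw [hVr]
      linarith [h5, h6]
    calc q * (1-q) * (∑ z ∈ s, Eloc q (s ∪ insert z (latNbrs z))
          (fun η => cInd η z * (f (flipCfg η z) - f η) ^ 2))
        ≤ q * (1-q) * ((4*(d:ℝ)^2 + 8*(d:ℝ)^3) * q^2 * (s.card:ℝ)) :=
          mul_le_mul_of_nonneg_left hsum3 hqp
      _ = (4*(d:ℝ)^2 + 8*(d:ℝ)^3) * q^2 * ((s.card:ℝ) * (q*(1-q))) := by ring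
  -- conclusion
  have hfinal : Dform q s f / Varloc q s f ≤ (16*(d:ℝ)^2 + 32*(d:ℝ)^3) * q^2 := by
    rw [div_le_iff₀ hVarpos]
    calc Dform q s f ≤ (4*(d:ℝ)^2 + 8*(d:ℝ)^3) * q^2 * ((s.card:ℝ) * (q*(1-q))) := hD
      _ = (16*(d:ℝ)^2 + 32*(d:ℝ)^3) * q^2 * ((s.card:ℝ) * (q*(1-q)) / 4) := by ring
      _ ≤ (16*(d:ℝ)^2 + 32*(d:ℝ)^3) * q^2 * Varloc q s f := by
          apply mul_le_mul_of_nonneg_left hVar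
          positivity
  have hmem : Dform q s f / Varloc q s f ∈
      {r : ℝ | ∃ (s' : Finset (Fin d → ℤ)) (f' : ((Fin d → ℤ) → Bool) → ℝ),
        localOn s' f' ∧ Varloc q s' f' ≠ 0 ∧ r = Dform q s' f' / Varloc q s' f'} :=
    ⟨s, f, hloc, ne_of_gt hVarpos, rfl⟩
  have hbdd : BddBelow {r : ℝ | ∃ (s' : Finset (Fin d → ℤ)) (f' : ((Fin d → ℤ) → Bool) → ℝ),
      localOn s' f' ∧ Varloc q s' f' ≠ 0 ∧ r = Dform q s' f' / Varloc q s' f'} := by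
    refine ⟨0, ?_⟩
    intro r hr
    obtain ⟨s', f', _, _, hr'⟩ := hr
    rw [hr']
    exact div_nonneg (FA1fAux.Dform_nonneg hq0.le hq1 s' f')
      (FA1fAux.Varloc_nonneg hq0.le hq1 s' f')
  exact le_trans (csInf_le hbdd hmem) hfinal

end
end

section
/- Let d = 2 and q small. The FA1f Dirichlet form of f(η) = inf{log(1 + ‖x‖₁ ∧ ℓ) : η(x) = 0}, with ℓ = C₀q^{−1/2}, satisfies D(f) ≤ C q² log(1/q). -/
open Finset

noncomputable section

/-- The `ℓ¹` norm of `x ∈ ℤ²`. -/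
def norm1 (x : Fin 2 → ℤ) : ℤ := ∑ i, |x i|

/-- The test function `f(η) = inf{log(1 + ‖x‖₁ ∧ ℓ) : η(x) = 0}`. -/
def fLog (ℓ : ℝ) (η : (Fin 2 → ℤ) → Bool) : ℝ :=
  sInf {r : ℝ | ∃ x : Fin 2 → ℤ, η x = false ∧ r = Real.log (1 + min ((norm1 x : ℝ)) ℓ)}

/-- The box `Λ = {x ∈ ℤ² : ‖x‖₁ ≤ ℓ}` as a finite set. -/
def ballFinset (ℓ : ℝ) : Finset (Fin 2 → ℤ) :=
  (Fintype.piFinset fun _ => Finset.Icc (-⌈ℓ⌉) ⌈ℓ⌉).filter fun x => norm1 x ≤ ⌊ℓ⌋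

lemma norm1_nonneg (x : Fin 2 → ℤ) : 0 ≤ norm1 x :=
  Finset.sum_nonneg fun i _ => abs_nonneg _

lemma mem_latNbrs {d : ℕ} {x y : Fin d → ℤ} :
    y ∈ latNbrs x ↔ ∃ i, y = Function.update x i (x i + 1) ∨ y = Function.update x i (x i - 1) := by
  simp [latNbrs]

lemma nbr_ne {d : ℕ} {x y : Fin d → ℤ} (h : y ∈ latNbrs x) : y ≠ x := by
  rw [mem_latNbrs] at h
  obtain ⟨i, h | h⟩ := h <;> subst h <;> intro hc <;> have := congrFun hc i <;>
    simp [Function.update_self] at this <;> omega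

lemma norm1_update (x : Fin 2 → ℤ) (i : Fin 2) (a : ℤ) :
    norm1 (Function.update x i a) = norm1 x - |x i| + |a| := by
  unfold norm1
  rw [← Finset.sum_erase_add _ _ (Finset.mem_univ i),
      ← Finset.sum_erase_add univ (fun j => |x j|) (Finset.mem_univ i)]
  have h1 : ∀ j ∈ Finset.univ.erase i, |Function.update x i a j| = |x j| := fun j hj => by
    rw [Function.update_of_ne (Finset.ne_of_mem_erase hj)]
  rw [Finset.sum_congr rfl h1, Function.update_self]
  ring

lemma nbr_norm {x y : Fin 2 → ℤ} (h : y ∈ latNbrs x) : norm1 y ≤ norm1 x + 1 := by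
  rw [mem_latNbrs] at h
  obtain ⟨i, h | h⟩ := h <;> subst h <;> rw [norm1_update] <;>
    have h1 := abs_nonneg (x i) <;> have h2 := abs_sub_abs_le_abs_sub (x i + 1) (x i) <;>
    have h3 := abs_sub_abs_le_abs_sub (x i - 1) (x i) <;> simp at h2 h3 <;> omega

/-- The bound on the single-flip difference. -/
def Blog (ℓ : ℝ) (x : Fin 2 → ℤ) : ℝ :=
  Real.log (1 + min ((norm1 x : ℝ) + 1) ℓ) - Real.log (1 + min ((norm1 x : ℝ)) ℓ)

def vfun (ℓ : ℝ) (z : Fin 2 → ℤ) : ℝ := Real.log (1 + min ((norm1 z : ℝ)) ℓ)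

def Sset (ℓ : ℝ) (η : (Fin 2 → ℤ) → Bool) : Set ℝ :=
  {r : ℝ | ∃ z : Fin 2 → ℤ, η z = false ∧ r = vfun ℓ z}

lemma fLog_eq (ℓ : ℝ) (η : (Fin 2 → ℤ) → Bool) : fLog ℓ η = sInf (Sset ℓ η) := rfl

lemma vfun_nonneg {ℓ : ℝ} (hℓ : 0 ≤ ℓ) (z : Fin 2 → ℤ) : 0 ≤ vfun ℓ z := by
  apply Real.log_nonneg
  have h1 : (0:ℝ) ≤ (norm1 z : ℝ) := by exact_mod_cast norm1_nonneg z
  have : (0:ℝ) ≤ min ((norm1 z : ℝ)) ℓ := le_min h1 hℓ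
  linarith

lemma Sset_bddBelow {ℓ : ℝ} (hℓ : 0 ≤ ℓ) (η : (Fin 2 → ℤ) → Bool) : BddBelow (Sset ℓ η) := by
  refine ⟨0, fun r hr => ?_⟩
  obtain ⟨z, -, rfl⟩ := hr
  exact vfun_nonneg hℓ z

lemma Sset_flip_true {ℓ : ℝ} {η : (Fin 2 → ℤ) → Bool} {x : Fin 2 → ℤ} (hx : η x = true) :
    Sset ℓ (flipCfg η x) = insert (vfun ℓ x) (Sset ℓ η) := by
  ext r
  constructor
  · rintro ⟨z, hz, rfl⟩
    by_cases h : z = x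
    · subst h; exact Set.mem_insert _ _
    · simp only [flipCfg, if_neg h] at hz
      exact Set.mem_insert_of_mem _ ⟨z, hz, rfl⟩
  · rintro (rfl | ⟨z, hz, rfl⟩)
    · exact ⟨x, by simp [flipCfg, hx], rfl⟩
    · have h : z ≠ x := fun hc => by subst hc; rw [hx] at hz; cases hz
      exact ⟨z, by simp [flipCfg, if_neg h, hz], rfl⟩

lemma Sset_flip_false {ℓ : ℝ} {η : (Fin 2 → ℤ) → Bool} {x : Fin 2 → ℤ} (hx : η x = false) :
    Sset ℓ η = insert (vfun ℓ x) (Sset ℓ (flipCfg η x)) := by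
  ext r
  constructor
  · rintro ⟨z, hz, rfl⟩
    by_cases h : z = x
    · subst h; exact Set.mem_insert _ _
    · exact Set.mem_insert_of_mem _ ⟨z, by simp [flipCfg, if_neg h, hz], rfl⟩
  · rintro (rfl | ⟨z, hz, rfl⟩)
    · exact ⟨x, hx, rfl⟩
    · by_cases h : z = x
      · subst h; exact ⟨z, hx, rfl⟩
      · simp only [flipCfg, if_neg h] at hz
        exact ⟨z, hz, rfl⟩

lemma one_add_min_pos {ℓ : ℝ} (hℓ : 0 ≤ ℓ) {N : ℝ} (hN : 0 ≤ N) : 0 < 1 + min N ℓ := by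
  have : (0:ℝ) ≤ min N ℓ := le_min hN hℓ
  linarith

lemma Blog_nonneg {ℓ : ℝ} (hℓ : 0 ≤ ℓ) (x : Fin 2 → ℤ) : 0 ≤ Blog ℓ x := by
  have h1 : (0:ℝ) ≤ (norm1 x : ℝ) := by exact_mod_cast norm1_nonneg x
  apply sub_nonneg.2
  apply Real.log_le_log (one_add_min_pos hℓ h1)
  have : min ((norm1 x : ℝ)) ℓ ≤ min ((norm1 x : ℝ) + 1) ℓ :=
    min_le_min (by linarith) le_rfl
  linarith

lemma vfun_le {ℓ : ℝ} (hℓ : 0 ≤ ℓ) {x y : Fin 2 → ℤ} (h : y ∈ latNbrs x) :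
    vfun ℓ y ≤ vfun ℓ x + Blog ℓ x := by
  have hy : (0:ℝ) ≤ (norm1 y : ℝ) := by exact_mod_cast norm1_nonneg y
  have hxy : (norm1 y : ℝ) ≤ (norm1 x : ℝ) + 1 := by exact_mod_cast nbr_norm h
  unfold vfun Blog
  have h2 : Real.log (1 + min ((norm1 y : ℝ)) ℓ) ≤ Real.log (1 + min ((norm1 x : ℝ) + 1) ℓ) := by
    apply Real.log_le_log (one_add_min_pos hℓ hy)
    have := min_le_min hxy (le_refl ℓ)
    linarith
  linarith

lemma Blog_le {ℓ : ℝ} (hℓ : 0 ≤ ℓ) (x : Fin 2 → ℤ) :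
    Blog ℓ x ≤ 1 / (1 + (norm1 x : ℝ)) := by
  have h1 : (0:ℝ) ≤ (norm1 x : ℝ) := by exact_mod_cast norm1_nonneg x
  set N := (norm1 x : ℝ)
  by_cases hc : ℓ ≤ N
  · have e1 : min N ℓ = ℓ := min_eq_right hc
    have e2 : min (N + 1) ℓ = ℓ := min_eq_right (by linarith)
    unfold Blog
    rw [e1, e2, sub_self]
    positivity
  · push_neg at hc
    have e1 : min N ℓ = N := min_eq_left hc.le
    unfold Blog
    rw [e1]
    have h2 : Real.log (1 + min (N + 1) ℓ) ≤ Real.log (2 + N) := by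
      apply Real.log_le_log (one_add_min_pos hℓ (by linarith))
      have := min_le_left (N + 1) ℓ
      linarith
    have h3 : Real.log (2 + N) - Real.log (1 + N) ≤ 1 / (1 + N) := by
      rw [← Real.log_div (by linarith) (by linarith)]
      have h4 := Real.log_le_sub_one_of_pos (x := (2 + N) / (1 + N)) (by positivity)
      have h5 : (2 + N) / (1 + N) - 1 = 1 / (1 + N) := by
        have : (1:ℝ) + N ≠ 0 := by linarith
        field_simp
        ring
      linarith
    linarith

lemma Blog_zero {ℓ : ℝ} {x : Fin 2 → ℤ} (hc : ℓ ≤ (norm1 x : ℝ)) : Blog ℓ x = 0 := by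
  unfold Blog
  rw [min_eq_right hc, min_eq_right (by linarith), sub_self]

/-- Key pointwise bound: with the constraint satisfied, the flip changes `fLog` by at most
`Blog ℓ x`. -/
lemma flip_bound {ℓ : ℝ} (hℓ : 0 ≤ ℓ) (η : (Fin 2 → ℤ) → Bool) (x : Fin 2 → ℤ)
    (h : ∃ y ∈ latNbrs x, η y = false) :
    |fLog ℓ (flipCfg η x) - fLog ℓ η| ≤ Blog ℓ x := by
  obtain ⟨y, hy, hyf⟩ := h
  have hyx : y ≠ x := nbr_ne hy
  have hBnn := Blog_nonneg hℓ x
  have key : ∀ (T : Set ℝ), BddBelow T → vfun ℓ y ∈ T →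
      |min (vfun ℓ x) (sInf T) - sInf T| ≤ Blog ℓ x := by
    intro T hbdd hmem
    have hinf : sInf T ≤ vfun ℓ y := csInf_le hbdd hmem
    have hv : vfun ℓ y ≤ vfun ℓ x + Blog ℓ x := vfun_le hℓ hy
    rcases le_total (vfun ℓ x) (sInf T) with hle | hle
    · rw [min_eq_left hle, abs_sub_comm, abs_of_nonneg (by linarith)]
      linarith
    · rw [min_eq_right hle, sub_self, abs_zero]; exact hBnn
  cases hx : η x with
  | true =>
      have hSf : Sset ℓ (flipCfg η x) = insert (vfun ℓ x) (Sset ℓ η) := Sset_flip_true hx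
      have hne : (Sset ℓ η).Nonempty := ⟨vfun ℓ y, y, hyf, rfl⟩
      rw [fLog_eq, fLog_eq, hSf, csInf_insert (Sset_bddBelow hℓ η) hne]
      exact key _ (Sset_bddBelow hℓ η) ⟨y, hyf, rfl⟩
  | false =>
      have hSf : Sset ℓ η = insert (vfun ℓ x) (Sset ℓ (flipCfg η x)) := Sset_flip_false hx
      have hyf' : flipCfg η x y = false := by simp [flipCfg, if_neg hyx, hyf]
      have hne : (Sset ℓ (flipCfg η x)).Nonempty := ⟨vfun ℓ y, y, hyf', rfl⟩
      rw [fLog_eq, fLog_eq, hSf, csInf_insert (Sset_bddBelow hℓ _) hne, abs_sub_comm]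
      exact key _ (Sset_bddBelow hℓ _) ⟨y, hyf', rfl⟩


lemma sum_prod_bool {α : Type*} [Fintype α] [DecidableEq α] (u : α → Bool → ℝ) :
    ∑ η : α → Bool, ∏ v, u v (η v) = ∏ v, (u v false + u v true) := by
  have h : ∀ v : α, u v false + u v true = ∑ b : Bool, u v b := by
    intro v; rw [Fintype.sum_bool]; ring
  simp_rw [h]
  rw [Finset.prod_univ_sum (fun _ => (Finset.univ : Finset Bool)) u]
  rw [Fintype.piFinset_univ]

lemma weight_nonneg {d : ℕ} {q : ℝ} (h0 : 0 ≤ q) (h1 : q ≤ 1) {s : Finset (Fin d → ℤ)}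
    (η : ↥s → Bool) : 0 ≤ ∏ v : ↥s, if η v then (1 - q) else q :=
  Finset.prod_nonneg fun v _ => by split <;> linarith

lemma Eloc_mono {d : ℕ} {q : ℝ} (h0 : 0 ≤ q) (h1 : q ≤ 1) {s : Finset (Fin d → ℤ)}
    {g h : ((Fin d → ℤ) → Bool) → ℝ}
    (hle : ∀ η : ↥s → Bool, g (extendCfg s η) ≤ h (extendCfg s η)) :
    Eloc q s g ≤ Eloc q s h :=
  Finset.sum_le_sum fun η _ => mul_le_mul_of_nonneg_left (hle η) (weight_nonneg h0 h1 η)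

lemma Eloc_smul {d : ℕ} (q : ℝ) (s : Finset (Fin d → ℤ)) (c : ℝ)
    (g : ((Fin d → ℤ) → Bool) → ℝ) :
    Eloc q s (fun η => c * g η) = c * Eloc q s g := by
  unfold Eloc
  rw [Finset.mul_sum]
  exact Finset.sum_congr rfl fun η _ => by ring

lemma Eloc_zero {d : ℕ} (q : ℝ) (s : Finset (Fin d → ℤ)) {g : ((Fin d → ℤ) → Bool) → ℝ}
    (hg : ∀ η : ↥s → Bool, g (extendCfg s η) = 0) : Eloc q s g = 0 :=
  Finset.sum_eq_zero fun η _ => by rw [hg η, mul_zero]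

/-- Single site marginal. -/
lemma Eloc_indicator {d : ℕ} (q : ℝ) {s : Finset (Fin d → ℤ)} {y : Fin d → ℤ} (hy : y ∈ s) :
    Eloc q s (fun η => if η y = false then 1 else 0) = q := by
  classical
  set Y : ↥s := ⟨y, hy⟩
  set u : ↥s → Bool → ℝ := fun v b =>
    (if b then (1 - q) else q) * (if v = Y then (if b = false then 1 else 0) else 1) with hu
  have key : ∀ η : ↥s → Bool,
      (∏ v : ↥s, if η v then (1 - q) else q) * (if extendCfg s η y = false then 1 else 0)
      = ∏ v : ↥s, u v (η v) := by
    intro η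
    have he : extendCfg s η y = η Y := by simp [extendCfg, hy]; rfl
    rw [he, hu]
    rw [Finset.prod_mul_distrib]
    congr 1
    rw [Finset.prod_ite_eq' Finset.univ Y (fun v => if η v = false then 1 else 0)]
    simp
  unfold Eloc
  simp_rw [key]
  rw [sum_prod_bool u]
  have hval : ∀ v : ↥s, u v false + u v true = if v = Y then q else 1 := by
    intro v; rw [hu]; by_cases h : v = Y <;> simp [h] <;> ring
  simp_rw [hval]
  rw [Finset.prod_ite_eq' Finset.univ Y (fun _ => q)]
  simp

/-- Total mass 1. -/
lemma Eloc_const {d : ℕ} (q : ℝ) (s : Finset (Fin d → ℤ)) (c : ℝ) :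
    Eloc q s (fun _ => c) = c := by
  unfold Eloc
  rw [← Finset.sum_mul]
  have : ∑ η : ↥s → Bool, ∏ v : ↥s, (if η v then (1 - q) else q) = 1 := by
    rw [sum_prod_bool (fun _ b => if b then (1 - q) else q)]
    simp
  rw [this, one_mul]

lemma card_latNbrs {x : Fin 2 → ℤ} : (latNbrs x).card ≤ 4 := by
  apply le_trans (Finset.card_biUnion_le)
  apply le_trans (Finset.sum_le_sum fun i _ => Finset.card_insert_le _ _)
  simp

lemma Eloc_sum {d : ℕ} (q : ℝ) (s : Finset (Fin d → ℤ)) {ι : Type*} (t : Finset ι)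
    (g : ι → ((Fin d → ℤ) → Bool) → ℝ) :
    Eloc q s (fun η => ∑ y ∈ t, g y η) = ∑ y ∈ t, Eloc q s (g y) := by
  unfold Eloc
  rw [Finset.sum_comm]
  exact Finset.sum_congr rfl fun η _ => by rw [Finset.mul_sum]

lemma Eloc_cInd_le {d : ℕ} {q : ℝ} (h0 : 0 ≤ q) (h1 : q ≤ 1) {s : Finset (Fin d → ℤ)}
    {x : Fin d → ℤ} (hsub : latNbrs x ⊆ s) (hcard : (latNbrs x).card ≤ 4) :
    Eloc q s (fun η => cInd η x) ≤ 4 * q := by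
  have step1 : Eloc q s (fun η => cInd η x) ≤
      Eloc q s (fun η => ∑ y ∈ latNbrs x, if η y = false then 1 else 0) := by
    apply Eloc_mono h0 h1
    intro η
    set ξ := extendCfg s η
    by_cases h : ∃ y ∈ latNbrs x, ξ y = false
    · obtain ⟨y, hy, hyf⟩ := h
      have : cInd ξ x = 1 := if_pos ⟨y, hy, hyf⟩
      rw [this]
      calc (1:ℝ) = if ξ y = false then 1 else 0 := by rw [hyf]; simp
        _ ≤ _ := Finset.single_le_sum (f := fun z => if ξ z = false then (1:ℝ) else 0)
          (fun z _ => by by_cases hz : ξ z = false <;> simp [hz]) hy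
    · have : cInd ξ x = 0 := if_neg h
      rw [this]
      exact Finset.sum_nonneg fun z _ => by split <;> norm_num
  rw [Eloc_sum] at step1
  have step2 : ∑ y ∈ latNbrs x, Eloc q s (fun η => if η y = false then 1 else 0)
      = (latNbrs x).card * q := by
    rw [Finset.sum_congr rfl fun y hy => Eloc_indicator q (hsub hy), Finset.sum_const,
      nsmul_eq_mul]
  calc Eloc q s (fun η => cInd η x) ≤ _ := step1
    _ = (latNbrs x).card * q := step2
    _ ≤ 4 * q := by
        apply mul_le_mul_of_nonneg_right _ h0
        exact_mod_cast hcard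


lemma norm1_eq (x : Fin 2 → ℤ) : norm1 x = |x 0| + |x 1| := by
  simp [norm1, Fin.sum_univ_two]

lemma notin_ball {ℓ : ℝ} (hℓ : 0 ≤ ℓ) {x : Fin 2 → ℤ} (hx : x ∉ ballFinset ℓ) :
    ℓ ≤ (norm1 x : ℝ) := by
  rw [ballFinset, Finset.mem_filter] at hx
  push_neg at hx
  by_cases hpi : x ∈ Fintype.piFinset fun _ : Fin 2 => Finset.Icc (-⌈ℓ⌉) ⌈ℓ⌉
  · have h2 : ⌊ℓ⌋ < norm1 x := hx hpi
    have := Int.lt_floor_add_one ℓ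
    have h3 : (⌊ℓ⌋ : ℝ) + 1 ≤ (norm1 x : ℝ) := by exact_mod_cast h2
    linarith
  · rw [Fintype.mem_piFinset] at hpi
    push_neg at hpi
    obtain ⟨i, hi⟩ := hpi
    rw [Finset.mem_Icc] at hi
    have habs : ⌈ℓ⌉ < |x i| := by rcases abs_cases (x i) with ⟨h, _⟩ | ⟨h, _⟩ <;> omega
    have hle : |x i| ≤ norm1 x := by
      fin_cases i <;> rw [norm1_eq] <;> [have := abs_nonneg (x 1); have := abs_nonneg (x 0)]
      <;> simp <;> omega
    have h4 : ℓ ≤ (⌈ℓ⌉ : ℝ) := Int.le_ceil ℓ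
    have h5 : ((⌈ℓ⌉:ℤ) : ℝ) ≤ ((norm1 x : ℤ) : ℝ) := by exact_mod_cast le_trans habs.le hle
    linarith

lemma shell_card (S : Finset (Fin 2 → ℤ)) (n : ℕ) (hS : ∀ x ∈ S, norm1 x = (n:ℤ)) :
    S.card ≤ 4 * (n + 1) := by
  classical
  have h1 : S.card ≤ ((Finset.Icc (-(n:ℤ)) n) ×ˢ (Finset.univ : Finset Bool)).card := by
    apply Finset.card_le_card_of_injOn (fun x => (x 0, decide (0 ≤ x 1)))
    · intro x hx
      have hn := hS x hx
      rw [norm1_eq] at hn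
      have h0 := abs_nonneg (x 0); have h1 := abs_nonneg (x 1)
      show (x 0, decide (0 ≤ x 1)) ∈ Finset.Icc (-(n:ℤ)) n ×ˢ (Finset.univ : Finset Bool)
      rw [Finset.mem_product, Finset.mem_Icc]
      rcases abs_cases (x 0) with ⟨h, _⟩ | ⟨h, _⟩ <;>
        exact ⟨⟨by omega, by omega⟩, Finset.mem_univ _⟩
    · intro x hx y hy hxy
      have hnx := hS x hx; have hny := hS y hy
      rw [norm1_eq] at hnx hny
      simp only [Prod.mk.injEq, decide_eq_decide] at hxy
      obtain ⟨h0, h1⟩ := hxy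
      funext i
      fin_cases i
      · exact h0
      · show x 1 = y 1
        rw [h0] at hnx
        by_cases hs : 0 ≤ x 1
        · have hs' := h1.mp hs
          rw [abs_of_nonneg hs] at hnx
          rw [abs_of_nonneg hs'] at hny
          omega
        · have hs' : ¬ 0 ≤ y 1 := fun hc => hs (h1.mpr hc)
          rw [abs_of_neg (lt_of_not_ge hs)] at hnx
          rw [abs_of_neg (lt_of_not_ge hs')] at hny
          omega
  rw [Finset.card_product, Int.card_Icc] at h1
  simp at h1
  omega

lemma harmonic_le (m : ℕ) : ∑ k ∈ Finset.range m, 1 / ((k:ℝ) + 1) ≤ 1 + Real.log m := by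
  induction m with
  | zero => simp
  | succ m ih =>
      rw [Finset.sum_range_succ]
      rcases Nat.eq_zero_or_pos m with hm | hm
      · subst hm; simp
      · have hm1 : (1:ℝ) ≤ (m:ℝ) := by exact_mod_cast hm
        have hlog : 1 / ((m:ℝ) + 1) ≤ Real.log ((m:ℝ)+1) - Real.log m := by
          rw [← Real.log_div (by linarith) (by linarith)]
          have h4 := Real.log_le_sub_one_of_pos (x := (m:ℝ) / ((m:ℝ) + 1)) (by positivity)
          rw [Real.log_div (by linarith) (by linarith)] at h4
          have h5 : (m:ℝ) / ((m:ℝ)+1) - 1 = -(1 / ((m:ℝ)+1)) := by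
            field_simp
            ring
          rw [Real.log_div (by linarith) (by linarith)]
          linarith
        have : ((m+1 : ℕ) : ℝ) = (m:ℝ) + 1 := by push_cast; ring
        rw [this]
        linarith

lemma ball_sum_le {ℓ : ℝ} (hℓ : 0 ≤ ℓ) :
    ∑ x ∈ ballFinset ℓ, (1 / (1 + (norm1 x : ℝ)))^2 ≤ 4 * (1 + Real.log (ℓ + 1)) := by
  classical
  set B := ballFinset ℓ
  set M : (Fin 2 → ℤ) → ℕ := fun x => (norm1 x).toNat with hM
  set g' : ℕ → ℝ := fun k => (1 / ((k:ℝ) + 1))^2 with hg'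
  set T : ℕ := ⌊ℓ⌋.toNat + 1 with hT
  have step0 : ∑ x ∈ B, (1 / (1 + (norm1 x : ℝ)))^2 = ∑ x ∈ B, g' (M x) := by
    apply Finset.sum_congr rfl
    intro x _
    have : ((M x : ℕ) : ℝ) = ((norm1 x : ℤ) : ℝ) := by
      rw [hM]; exact_mod_cast congrArg Int.cast (Int.toNat_of_nonneg (norm1_nonneg x))
    rw [hg']; simp only []
    rw [this, add_comm]
  have step1 : ∑ x ∈ B, g' (M x) = ∑ k ∈ Finset.image M B, (B.filter fun x => M x = k).card • g' k :=
    Finset.sum_comp g' M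
  have himg : Finset.image M B ⊆ Finset.range T := by
    intro k hk
    rw [Finset.mem_image] at hk
    obtain ⟨x, hx, rfl⟩ := hk
    rw [Finset.mem_range, hT]
    have hxB : norm1 x ≤ ⌊ℓ⌋ := (Finset.mem_filter.1 hx).2
    show (norm1 x).toNat < ⌊ℓ⌋.toNat + 1
    omega
  have step2 : ∑ k ∈ Finset.image M B, (B.filter fun x => M x = k).card • g' k
      = ∑ k ∈ Finset.range T, (B.filter fun x => M x = k).card • g' k := by
    apply Finset.sum_subset himg
    intro k _ hk
    have : (B.filter fun x => M x = k) = ∅ := by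
      rw [Finset.filter_eq_empty_iff]
      intro x hx hMx
      exact hk (Finset.mem_image.2 ⟨x, hx, hMx⟩)
    rw [this]; simp
  have step3 : ∀ k ∈ Finset.range T, (B.filter fun x => M x = k).card • g' k ≤ 4 / ((k:ℝ)+1) := by
    intro k _
    have hcard : (B.filter fun x => M x = k).card ≤ 4 * (k+1) := by
      apply shell_card
      intro x hx
      have h5 : (norm1 x).toNat = k := (Finset.mem_filter.1 hx).2
      have hnn := norm1_nonneg x
      omega
    have hgnn : 0 ≤ g' k := by rw [hg']; positivity
    calc (B.filter fun x => M x = k).card • g' k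
        ≤ (4 * (k+1) : ℕ) • g' k := nsmul_le_nsmul_left hgnn hcard
      _ = (4 * ((k:ℝ)+1)) * g' k := by push_cast [nsmul_eq_mul]; ring
      _ = 4 / ((k:ℝ)+1) := by rw [hg']; field_simp
  have step4 : ∑ k ∈ Finset.range T, (4:ℝ) / ((k:ℝ)+1) ≤ 4 * (1 + Real.log T) := by
    have := harmonic_le T
    have h2 : ∑ k ∈ Finset.range T, (4:ℝ) / ((k:ℝ)+1) = 4 * ∑ k ∈ Finset.range T, 1 / ((k:ℝ)+1) := by
      rw [Finset.mul_sum]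
      exact Finset.sum_congr rfl fun k _ => by ring
    rw [h2]
    linarith
  have hTle : (T:ℝ) ≤ ℓ + 1 := by
    rw [hT]
    push_cast
    have : ((⌊ℓ⌋.toNat : ℤ) : ℝ) ≤ ℓ := by
      rw [Int.toNat_of_nonneg (Int.floor_nonneg.2 hℓ)]
      exact Int.floor_le ℓ
    push_cast at this
    linarith
  have hlogT : Real.log T ≤ Real.log (ℓ + 1) := by
    apply Real.log_le_log (by positivity) hTle
  calc ∑ x ∈ B, (1 / (1 + (norm1 x : ℝ)))^2
      = ∑ k ∈ Finset.range T, (B.filter fun x => M x = k).card • g' k := by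
        rw [step0, step1, step2]
    _ ≤ ∑ k ∈ Finset.range T, (4:ℝ) / ((k:ℝ)+1) := Finset.sum_le_sum step3
    _ ≤ 4 * (1 + Real.log T) := step4
    _ ≤ 4 * (1 + Real.log (ℓ + 1)) := by linarith


set_option maxHeartbeats 1000000 in
/-- for `d = 2`, `ℓ = C₀ q^{−1/2}`, the FA1f Dirichlet form of
`f(η) = inf{log(1 + ‖x‖₁ ∧ ℓ) : η(x) = 0}` satisfies `D(f) ≤ C q² log(1/q)` for small `q`. -/
theorem dirichlet_fLog_le (C₀ : ℝ) (hC₀ : 0 < C₀) :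
    ∃ C > (0 : ℝ), ∃ q₀ > (0 : ℝ), ∀ q : ℝ, 0 < q → q ≤ q₀ →
      Dform q (ballFinset (C₀ / Real.sqrt q)) (fLog (C₀ / Real.sqrt q)) ≤
        C * q ^ 2 * Real.log (1 / q) := by
  refine ⟨16 * (2 + |Real.log (2 * C₀)|), by positivity, min (C₀^2) (min (1/4) (Real.exp (-1))),
    by positivity, ?_⟩
  intro q hq hq0
  have hqC : q ≤ C₀^2 := le_trans hq0 (min_le_left _ _)
  have hq4 : q ≤ 1/4 := le_trans hq0 (le_trans (min_le_right _ _) (min_le_left _ _))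
  have hqe : q ≤ Real.exp (-1) := le_trans hq0 (le_trans (min_le_right _ _) (min_le_right _ _))
  have hq1 : q ≤ 1 := by linarith
  set ℓ : ℝ := C₀ / Real.sqrt q with hℓdef
  have hsq : 0 < Real.sqrt q := Real.sqrt_pos.2 hq
  have hℓpos : 0 < ℓ := by positivity
  have hℓ0 : 0 ≤ ℓ := hℓpos.le
  have hℓ1 : 1 ≤ ℓ := by
    rw [hℓdef, le_div_iff₀ hsq, one_mul]
    calc Real.sqrt q ≤ Real.sqrt (C₀^2) := Real.sqrt_le_sqrt hqC
      _ = C₀ := Real.sqrt_sq hC₀.le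
  set L : ℝ := Real.log (1 / q) with hLdef
  have hL : L = -Real.log q := by rw [hLdef, one_div, Real.log_inv]
  have hL1 : 1 ≤ L := by
    have := Real.log_le_log hq hqe
    rw [Real.log_exp] at this
    rw [hL]; linarith
  set B : Finset (Fin 2 → ℤ) := ballFinset ℓ with hB
  set F : (Fin 2 → ℤ) → ℝ := fun x =>
    Eloc q (B ∪ insert x (latNbrs x))
      (fun η => cInd η x * (fLog ℓ (flipCfg η x) - fLog ℓ η) ^ 2) with hF
  -- pointwise vanishing off the ball
  have hvanish : ∀ x ∉ B, F x = 0 := by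
    intro x hx
    have hfar : ℓ ≤ (norm1 x : ℝ) := notin_ball hℓ0 hx
    have hB0 : Blog ℓ x = 0 := Blog_zero hfar
    apply Eloc_zero
    intro η
    set ξ := extendCfg (B ∪ insert x (latNbrs x)) η with hξ
    by_cases hc : ∃ y ∈ latNbrs x, ξ y = false
    · have hd := flip_bound hℓ0 ξ x hc
      rw [hB0] at hd
      have : fLog ℓ (flipCfg ξ x) - fLog ℓ ξ = 0 := abs_nonpos_iff.1 hd
      rw [this]
      ring
    · have : cInd ξ x = 0 := if_neg hc
      rw [this, zero_mul]
  -- pointwise bound on the ball (indeed everywhere)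
  have hFle : ∀ x : Fin 2 → ℤ, F x ≤ 4 * q * (1 / (1 + (norm1 x : ℝ)))^2 := by
    intro x
    set s' := B ∪ insert x (latNbrs x) with hs'
    have hsub : latNbrs x ⊆ s' :=
      subset_trans (Finset.subset_insert x (latNbrs x)) Finset.subset_union_right
    have hBnn := Blog_nonneg hℓ0 x
    have step1 : F x ≤ Eloc q s' (fun η => (Blog ℓ x)^2 * cInd η x) := by
      apply Eloc_mono hq.le hq1
      intro η
      set ξ := extendCfg s' η with hξ
      by_cases hc : ∃ y ∈ latNbrs x, ξ y = false
      · have hci : cInd ξ x = 1 := if_pos hc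
        have hd := flip_bound hℓ0 ξ x hc
        have hsq2 : (fLog ℓ (flipCfg ξ x) - fLog ℓ ξ)^2 ≤ (Blog ℓ x)^2 := by
          rw [← sq_abs]
          exact pow_le_pow_left₀ (abs_nonneg _) hd 2
        rw [hci]
        linarith
      · have hci : cInd ξ x = 0 := if_neg hc
        rw [hci, zero_mul, mul_zero]
    have step2 : Eloc q s' (fun η => (Blog ℓ x)^2 * cInd η x) ≤ (Blog ℓ x)^2 * (4 * q) := by
      rw [Eloc_smul]
      exact mul_le_mul_of_nonneg_left (Eloc_cInd_le hq.le hq1 hsub card_latNbrs)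
        (by positivity)
    have step3 : (Blog ℓ x)^2 ≤ (1 / (1 + (norm1 x : ℝ)))^2 :=
      pow_le_pow_left₀ hBnn (Blog_le hℓ0 x) 2
    calc F x ≤ (Blog ℓ x)^2 * (4 * q) := le_trans step1 step2
      _ ≤ (1 / (1 + (norm1 x : ℝ)))^2 * (4 * q) :=
          mul_le_mul_of_nonneg_right step3 (by positivity)
      _ = 4 * q * (1 / (1 + (norm1 x : ℝ)))^2 := by ring
  -- sum bound
  have htsum : ∑' x : Fin 2 → ℤ, F x = ∑ x ∈ B, F x := tsum_eq_sum hvanish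
  have hsum : ∑ x ∈ B, F x ≤ 4 * q * (4 * (1 + Real.log (ℓ + 1))) := by
    calc ∑ x ∈ B, F x ≤ ∑ x ∈ B, 4 * q * (1 / (1 + (norm1 x : ℝ)))^2 :=
          Finset.sum_le_sum fun x _ => hFle x
      _ = 4 * q * ∑ x ∈ B, (1 / (1 + (norm1 x : ℝ)))^2 := by rw [Finset.mul_sum]
      _ ≤ 4 * q * (4 * (1 + Real.log (ℓ + 1))) := by
          apply mul_le_mul_of_nonneg_left (ball_sum_le hℓ0) (by positivity)
  have hDle : Dform q B (fLog ℓ) ≤ 16 * q^2 * (1 + Real.log (ℓ + 1)) := by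
    have hDeq : Dform q B (fLog ℓ) = q * (1 - q) * ∑ x ∈ B, F x := by
      rw [Dform, htsum]
    rw [hDeq]
    have hlognn : 0 ≤ 1 + Real.log (ℓ + 1) := by
      have : 0 ≤ Real.log (ℓ + 1) := Real.log_nonneg (by linarith)
      linarith
    have hsnn : 0 ≤ ∑ x ∈ B, F x := by
      apply Finset.sum_nonneg
      intro x _
      by_cases hx : x ∈ B
      · -- nonneg of Eloc of nonneg integrand
        apply Finset.sum_nonneg
        intro η _
        apply mul_nonneg (weight_nonneg hq.le hq1 η)
        apply mul_nonneg _ (sq_nonneg _)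
        unfold cInd; split <;> norm_num
      · rw [hvanish x hx]
    calc q * (1 - q) * ∑ x ∈ B, F x
        ≤ q * (1 - q) * (4 * q * (4 * (1 + Real.log (ℓ + 1)))) := by
          apply mul_le_mul_of_nonneg_left hsum (by nlinarith)
      _ ≤ q * 1 * (4 * q * (4 * (1 + Real.log (ℓ + 1)))) := by
          apply mul_le_mul_of_nonneg_right _ (by positivity)
          nlinarith
      _ = 16 * q^2 * (1 + Real.log (ℓ + 1)) := by ring
  -- final logarithmic estimate
  have hlogℓ : Real.log (ℓ + 1) ≤ Real.log (2 * C₀) + L / 2 := by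
    have h1 : Real.log (ℓ + 1) ≤ Real.log (2 * ℓ) := by
      apply Real.log_le_log (by linarith)
      linarith
    have h2 : Real.log (2 * ℓ) = Real.log 2 + Real.log C₀ - Real.log (Real.sqrt q) := by
      rw [hℓdef, Real.log_mul (by norm_num) (by positivity),
        Real.log_div (ne_of_gt hC₀) (ne_of_gt hsq)]
      ring
    have h3 : Real.log (Real.sqrt q) = Real.log q / 2 := Real.log_sqrt hq.le
    have h4 : Real.log (2 * C₀) = Real.log 2 + Real.log C₀ :=
      Real.log_mul (by norm_num) (ne_of_gt hC₀)
    rw [h2, h3] at h1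
    rw [h4]
    rw [hL]
    linarith
  have hfinal : 16 * q^2 * (1 + Real.log (ℓ + 1)) ≤ 16 * (2 + |Real.log (2 * C₀)|) * q^2 * L := by
    have habs : Real.log (2 * C₀) ≤ |Real.log (2 * C₀)| := le_abs_self _
    have habs0 : (0:ℝ) ≤ |Real.log (2 * C₀)| := abs_nonneg _
    have h5 : 1 + Real.log (ℓ + 1) ≤ (2 + |Real.log (2 * C₀)|) * L := by
      have : 1 + Real.log (ℓ + 1) ≤ 1 + |Real.log (2 * C₀)| + L / 2 := by linarith
      nlinarith
    have hq2 : (0:ℝ) ≤ 16 * q^2 := by positivity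
    calc 16 * q^2 * (1 + Real.log (ℓ + 1)) ≤ 16 * q^2 * ((2 + |Real.log (2 * C₀)|) * L) :=
          mul_le_mul_of_nonneg_left h5 hq2
      _ = 16 * (2 + |Real.log (2 * C₀)|) * q^2 * L := by ring
  exact le_trans hDle hfinal

end
end
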